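/- arXiv:2211.09201 — 11 statements merged into one kernel-verified Lean document; each statement's English description precedes it below -/
import Mathlib

section
/- Let n > s be non-negative integers and let R : ℝ → ℝ. Define D(h) = R(2h) - 2^s·R(h). If R(h) = o(h^s) as h → 0 and D(h) = o(h^n) as h → 0, then R(h) = o(h^n) as h → 0. -/
open Filter Asymptotics Topology

theorem first_fundamental_lemma (n s : ℕ) (hns : s < n) (R : ℝ → ℝ)
    (hR : (fun h : ℝ => R h) =o[𝓝[≠] (0:ℝ)] fun h => h ^ s)
    (hD : (fun h : ℝ => R (2 * h) - 2 ^ s * R h) =o[𝓝[≠] (0:ℝ)] fun h => h ^ n) :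
    (fun h : ℝ => R h) =o[𝓝[≠] (0:ℝ)] fun h => h ^ n := by
  rw [isLittleO_iff] at hD ⊢
  intro c hc
  have hDc := hD hc
  rw [eventually_nhdsWithin_iff, Metric.eventually_nhds_iff] at hDc ⊢
  obtain ⟨δ, hδpos, hDδ⟩ := hDc
  refine ⟨δ, hδpos, ?_⟩
  intro h hhδ hh0
  have hh0' : h ≠ 0 := hh0
  rw [Real.dist_eq, sub_zero] at hhδ
  have habs : (0:ℝ) < |h| := abs_pos.mpr hh0'
  have hDb : ∀ x : ℝ, |x| < δ → x ≠ 0 → |R (2*x) - 2^s * R x| ≤ c * |x|^n := by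
    intro x hx hx0
    have := hDδ (y := x) (by rw [Real.dist_eq, sub_zero]; exact hx) hx0
    simpa [abs_pow] using this
  have key : ∀ k : ℕ, |R h| ≤ 2^(s*k) * |R (h / 2^k)| + c * |h|^n * (1 - (2:ℝ)⁻¹^k) := by
    intro k
    induction k with
    | zero => simp
    | succ k ih =>
      set x := h / 2^(k+1) with hxdef
      have hx0 : x ≠ 0 := div_ne_zero hh0' (by positivity)
      have hxδ : |x| < δ := by
        rw [hxdef, abs_div, abs_pow, abs_two]
        calc |h| / 2^(k+1) ≤ |h| / 1 := by
              gcongr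
              exact one_le_pow₀ (by norm_num)
          _ = |h| := div_one _
          _ < δ := hhδ
      have h2 : 2 * x = h / 2^k := by rw [hxdef]; ring
      have hDk := hDb x hxδ hx0
      rw [h2] at hDk
      have step : |R (h/2^k)| ≤ 2^s * |R x| + c * |x|^n := by
        have : |R (h/2^k)| ≤ |2^s * R x| + |R (h/2^k) - 2^s * R x| := by
          have := abs_add_le (2^s * R x) (R (h/2^k) - 2^s * R x)
          simpa using this
        rw [abs_mul, abs_pow, abs_two] at this
        linarith
      have hxabs : |x| = |h| / 2^(k+1) := by
        rw [hxdef, abs_div, abs_pow, abs_two]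
      have h2le : (2:ℝ)^(s*k) * 2^(k+1) ≤ 2^(n*(k+1)) := by
        rw [← pow_add]
        exact pow_le_pow_right₀ (by norm_num) (by nlinarith)
      have e1 : ((2:ℝ)^(k+1))^n = 2^(n*(k+1)) := by rw [← pow_mul, mul_comm]
      have hpow : (2:ℝ)^(s*k) * (|h| / 2^(k+1))^n ≤ |h|^n * (2:ℝ)⁻¹^(k+1) := by
        have eL : (2:ℝ)^(s*k) * (|h| / 2^(k+1))^n = (|h|^n * 2^(s*k)) / 2^(n*(k+1)) := by
          rw [div_pow, e1]; ring
        have eR : |h|^n * (2:ℝ)⁻¹^(k+1) = |h|^n / 2^(k+1) := by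
          rw [inv_pow, div_eq_mul_inv]
        rw [eL, eR, div_le_div_iff₀ (by positivity) (by positivity)]
        calc |h|^n * 2^(s*k) * 2^(k+1) = |h|^n * (2^(s*k) * 2^(k+1)) := by ring
          _ ≤ |h|^n * 2^(n*(k+1)) := by gcongr
      calc |R h| ≤ 2^(s*k) * |R (h / 2^k)| + c * |h|^n * (1 - (2:ℝ)⁻¹^k) := ih
        _ ≤ 2^(s*k) * (2^s * |R x| + c * |x|^n) + c * |h|^n * (1 - (2:ℝ)⁻¹^k) := by
            gcongr
        _ = 2^(s*(k+1)) * |R x| + (2^(s*k) * (c * |x|^n) + c * |h|^n * (1 - (2:ℝ)⁻¹^k)) := by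
            rw [pow_mul, pow_mul, pow_succ]; ring
        _ ≤ 2^(s*(k+1)) * |R x| + c * |h|^n * (1 - (2:ℝ)⁻¹^(k+1)) := by
            have h1 : 2^(s*k) * (c * |x|^n) ≤ c * (|h|^n * (2:ℝ)⁻¹^(k+1)) := by
              rw [hxabs]
              calc 2^(s*k) * (c * (|h| / 2^(k+1))^n) = c * (2^(s*k) * (|h| / 2^(k+1))^n) := by ring
                _ ≤ c * (|h|^n * (2:ℝ)⁻¹^(k+1)) := by gcongr
            have hd : c * |h|^n * (1 - (2:ℝ)⁻¹^(k+1)) =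
                c * |h|^n * (1 - (2:ℝ)⁻¹^k) + c * (|h|^n * (2:ℝ)⁻¹^(k+1)) := by
              rw [pow_succ]; ring
            linarith
  -- limit part
  have goal : |R h| ≤ c * |h|^n := by
    refine le_of_forall_pos_le_add ?_
    intro ε hε
    have hε' : (0:ℝ) < ε / |h|^s := by positivity
    have ht : Tendsto (fun k : ℕ => h / 2^k) atTop (𝓝[≠] (0:ℝ)) := by
      apply tendsto_nhdsWithin_of_tendsto_nhds_of_eventually_within
      · have : Tendsto (fun k : ℕ => h * (2:ℝ)⁻¹^k) atTop (𝓝 (h * 0)) :=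
          (tendsto_pow_atTop_nhds_zero_of_lt_one (by norm_num) (by norm_num)).const_mul h
        simpa [div_eq_mul_inv, inv_pow] using this
      · filter_upwards with k
        exact div_ne_zero hh0' (by positivity)
    have hRk := (ht.eventually (hR.def hε')).exists
    obtain ⟨k, hk⟩ := hRk
    simp only [Real.norm_eq_abs, abs_pow] at hk
    have hterm : 2^(s*k) * |R (h / 2^k)| ≤ ε := by
      have h1 : (2:ℝ)^(s*k) * |R (h / 2^k)| ≤ 2^(s*k) * (ε / |h|^s * |h / 2^k|^s) := by
        gcongr
      have h2 : (2:ℝ)^(s*k) * (ε / |h|^s * |h / 2^k|^s) = ε := by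
        have e2 : ((2:ℝ)^k)^s = 2^(s*k) := by rw [← pow_mul, mul_comm]
        rw [abs_div, abs_pow, abs_two, div_pow, e2]
        field_simp
      linarith
    have := key k
    have h3 : c * |h|^n * (1 - (2:ℝ)⁻¹^k) ≤ c * |h|^n := by
      nlinarith [mul_nonneg (mul_nonneg hc.le (pow_nonneg (abs_nonneg h) n))
        (pow_nonneg (by norm_num : (0:ℝ) ≤ 2⁻¹) k)]
    linarith
  simpa [abs_pow] using goal
end

section
/- Let q > 1 be a real number, let n > s be non-negative integers, and let R : ℝ → ℝ. Define D(h) = R(qh) - q^s·R(h). If R(h) = o(h^s) and D(h) = o(h^n) as h → 0, then R(h) = o(h^n) as h → 0. -/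
open Filter Asymptotics Topology

theorem first_fundamental_lemma_general (q : ℝ) (hq : 1 < q) (n s : ℕ) (hns : s < n)
    (R : ℝ → ℝ)
    (hR : (fun h : ℝ => R h) =o[𝓝[≠] (0:ℝ)] fun h => h ^ s)
    (hD : (fun h : ℝ => R (q * h) - q ^ s * R h) =o[𝓝[≠] (0:ℝ)] fun h => h ^ n) :
    (fun h : ℝ => R h) =o[𝓝[≠] (0:ℝ)] fun h => h ^ n := by
  have hq0 : (0:ℝ) < q := lt_trans one_pos hq
  have hqne : q ≠ 0 := hq0.ne'
  have hqs : (0:ℝ) < q ^ s := pow_pos hq0 s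
  have hqn : (0:ℝ) < q ^ n := pow_pos hq0 n
  have hsn : q ^ s < q ^ n := pow_lt_pow_right₀ hq hns
  have hC : (0:ℝ) < q ^ n - q ^ s := by linarith
  -- R x / x^s → 0 on punctured nbhd
  have hRt : Tendsto (fun x : ℝ => R x / x ^ s) (𝓝[≠] (0:ℝ)) (𝓝 0) := by
    refine (isLittleO_iff_tendsto' ?_).mp hR
    filter_upwards [self_mem_nhdsWithin] with x hx hxs
    exact absurd hxs (pow_ne_zero _ hx)
  rw [isLittleO_iff]
  intro ε hε
  have hD' := hD.def (mul_pos hε hC)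
  rw [eventually_nhdsWithin_iff, Metric.eventually_nhds_iff] at hD' ⊢
  obtain ⟨δ, hδ, hDb⟩ := hD'
  refine ⟨δ, hδ, fun {h} hhδ hh0 => ?_⟩
  have hh0' : h ≠ 0 := by simpa using hh0
  have hhabs : |h| < δ := by simpa [Real.dist_eq] using hhδ
  -- telescoping identity
  have hqm : ∀ m : ℕ, q * (h / q ^ (m+1)) = h / q ^ m := by
    intro m
    field_simp
    ring
  have key : ∀ m : ℕ, R h = (q ^ s) ^ m * R (h / q ^ m) +
      ∑ j ∈ Finset.range m,
        (q ^ s) ^ j * (R (q * (h / q ^ (j+1))) - q ^ s * R (h / q ^ (j+1))) := by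
    intro m
    induction m with
    | zero => simp
    | succ m ih =>
      have h2 : R (h / q ^ m) = q ^ s * R (h / q ^ (m+1)) +
          (R (q * (h / q ^ (m+1))) - q ^ s * R (h / q ^ (m+1))) := by
        rw [hqm m]; ring
      rw [Finset.sum_range_succ, ih, h2]
      ring
  -- bound on each summand
  set r : ℝ := q ^ s / q ^ n with hrdef
  have hr0 : 0 ≤ r := le_of_lt (div_pos hqs hqn)
  have hr1 : r < 1 := (div_lt_one hqn).mpr hsn
  have hterm : ∀ j : ℕ,
      ‖(q ^ s) ^ j * (R (q * (h / q ^ (j+1))) - q ^ s * R (h / q ^ (j+1)))‖ ≤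
        (ε * (q ^ n - q ^ s) * |h| ^ n / q ^ n) * r ^ j := by
    intro j
    have htne : h / q ^ (j+1) ≠ 0 := div_ne_zero hh0' (pow_ne_zero _ hqne)
    have hqj1 : (1:ℝ) ≤ q ^ (j+1) := one_le_pow₀ hq.le
    have htabs : |h / q ^ (j+1)| ≤ |h| := by
      rw [abs_div, abs_of_pos (pow_pos hq0 _)]
      exact div_le_self (abs_nonneg _) hqj1
    have htδ : dist (h / q ^ (j+1)) 0 < δ := by
      rw [Real.dist_eq, sub_zero]
      exact lt_of_le_of_lt htabs hhabs
    have hDbj := hDb htδ (by simpa using htne)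
    have h1 : ‖(h / q ^ (j+1)) ^ n‖ = |h| ^ n / (q ^ (j+1)) ^ n := by
      rw [Real.norm_eq_abs, abs_pow, abs_div, abs_of_pos (pow_pos hq0 _), div_pow]
    rw [h1] at hDbj
    have h2 : ‖(q ^ s) ^ j * (R (q * (h / q ^ (j+1))) - q ^ s * R (h / q ^ (j+1)))‖
        = (q ^ s) ^ j * ‖R (q * (h / q ^ (j+1))) - q ^ s * R (h / q ^ (j+1))‖ := by
      rw [norm_mul, Real.norm_eq_abs ((q ^ s) ^ j), abs_of_pos (pow_pos hqs _)]
    rw [h2]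
    have h3 : (q ^ s) ^ j * (ε * (q ^ n - q ^ s) * (|h| ^ n / (q ^ (j+1)) ^ n))
        = (ε * (q ^ n - q ^ s) * |h| ^ n / q ^ n) * r ^ j := by
      rw [hrdef, div_pow]
      field_simp
      ring
    calc (q ^ s) ^ j * ‖R (q * (h / q ^ (j+1))) - q ^ s * R (h / q ^ (j+1))‖
        ≤ (q ^ s) ^ j * (ε * (q ^ n - q ^ s) * (|h| ^ n / (q ^ (j+1)) ^ n)) := by
          have := hDbj
          have hpos : (0:ℝ) ≤ (q ^ s) ^ j := le_of_lt (pow_pos hqs _)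
          exact mul_le_mul_of_nonneg_left this hpos
      _ = (ε * (q ^ n - q ^ s) * |h| ^ n / q ^ n) * r ^ j := h3
  -- bound on the sum
  have hK : (0:ℝ) ≤ ε * (q ^ n - q ^ s) * |h| ^ n / q ^ n := by positivity
  have hgeom : ∀ m : ℕ, ∑ j ∈ Finset.range m, r ^ j ≤ 1 / (1 - r) := by
    intro m
    have h1r : (0:ℝ) < 1 - r := by linarith
    rw [le_div_iff₀ h1r]
    nlinarith [geom_sum_mul r m, pow_nonneg hr0 m]
  have hsum : ∀ m : ℕ,
      ‖∑ j ∈ Finset.range m,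
        (q ^ s) ^ j * (R (q * (h / q ^ (j+1))) - q ^ s * R (h / q ^ (j+1)))‖ ≤
        ε * |h| ^ n := by
    intro m
    calc ‖∑ j ∈ Finset.range m,
        (q ^ s) ^ j * (R (q * (h / q ^ (j+1))) - q ^ s * R (h / q ^ (j+1)))‖
        ≤ ∑ j ∈ Finset.range m,
          ‖(q ^ s) ^ j * (R (q * (h / q ^ (j+1))) - q ^ s * R (h / q ^ (j+1)))‖ :=
          norm_sum_le _ _
      _ ≤ ∑ j ∈ Finset.range m, (ε * (q ^ n - q ^ s) * |h| ^ n / q ^ n) * r ^ j :=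
          Finset.sum_le_sum fun j _ => hterm j
      _ = (ε * (q ^ n - q ^ s) * |h| ^ n / q ^ n) * ∑ j ∈ Finset.range m, r ^ j := by
          rw [Finset.mul_sum]
      _ ≤ (ε * (q ^ n - q ^ s) * |h| ^ n / q ^ n) * (1 / (1 - r)) :=
          mul_le_mul_of_nonneg_left (hgeom m) hK
      _ = ε * |h| ^ n := by
          rw [hrdef]
          field_simp
  -- the tail tends to 0
  have htm : Tendsto (fun m : ℕ => h / q ^ m) atTop (𝓝[≠] (0:ℝ)) := by
    rw [tendsto_nhdsWithin_iff]
    constructor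
    · exact Tendsto.div_atTop tendsto_const_nhds (tendsto_pow_atTop_atTop_of_one_lt hq)
    · exact Eventually.of_forall fun m => by
        simpa using div_ne_zero hh0' (pow_ne_zero m hqne)
  have hcomp : Tendsto (fun m : ℕ => R (h / q ^ m) / (h / q ^ m) ^ s) atTop (𝓝 0) :=
    hRt.comp htm
  have hRlim : Tendsto (fun m : ℕ => (q ^ s) ^ m * R (h / q ^ m)) atTop (𝓝 0) := by
    have heq : (fun m : ℕ => (q ^ s) ^ m * R (h / q ^ m))
        = fun m : ℕ => h ^ s * (R (h / q ^ m) / (h / q ^ m) ^ s) := by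
      funext m
      rw [div_pow]
      have h1 : (q ^ m : ℝ) ^ s ≠ 0 := pow_ne_zero _ (pow_ne_zero _ hqne)
      have h2 : (h : ℝ) ^ s ≠ 0 := pow_ne_zero _ hh0'
      field_simp
      ring
    rw [heq]
    simpa using hcomp.const_mul (h ^ s)
  have h0 : Tendsto (fun m : ℕ => ‖(q ^ s) ^ m * R (h / q ^ m)‖) atTop (𝓝 0) := by
    simpa using hRlim.norm
  have hbound : ∀ m : ℕ, ‖R h‖ - ε * |h| ^ n ≤ ‖(q ^ s) ^ m * R (h / q ^ m)‖ := by
    intro m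
    have h1 : ‖R h‖ ≤ ‖(q ^ s) ^ m * R (h / q ^ m)‖ +
        ‖∑ j ∈ Finset.range m,
          (q ^ s) ^ j * (R (q * (h / q ^ (j+1))) - q ^ s * R (h / q ^ (j+1)))‖ := by
      rw [key m]
      exact norm_add_le _ _
    have := hsum m
    linarith
  have hfin : ‖R h‖ - ε * |h| ^ n ≤ 0 := ge_of_tendsto' h0 hbound
  have hn : ‖h ^ n‖ = |h| ^ n := by rw [Real.norm_eq_abs, abs_pow]
  rw [hn]
  linarith
end

section
/- For every positive integer k and every even integer n with n ≥ 2k, the sum ∑_{j=0}^{2k} (-1)^j · C(2k, j) · (k - j)^n is nonzero. -/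
open Finset

noncomputable def Sm (k m : ℕ) : ℝ :=
  (fwdDiff (1:ℝ))^[2*k] (fun x : ℝ => x ^ m) (-(k:ℝ))

lemma fwdDiff_sq (f : ℝ → ℝ) (x : ℝ) :
    (fwdDiff (1:ℝ))^[2] f x = f (x+1+1) - 2*f (x+1) + f x := by
  simp [Function.iterate_succ_apply', fwdDiff]
  ring

lemma delta2_pow (m : ℕ) (x : ℝ) :
    (fwdDiff (1:ℝ))^[2] (fun y => y ^ m) x
      = ∑ b ∈ range m, (if Even (m - b) then 2*(m.choose b : ℝ) else 0) * (x+1) ^ b := by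
  rw [fwdDiff_sq]
  have h1 : x + 1 + 1 = (x+1) + 1 := by ring
  have h2 : x = (x+1) - 1 := by ring
  set y := x + 1 with hy
  rw [h1, h2, add_pow y 1 m, sub_pow y 1 m]
  have key : ∀ b ∈ range (m+1),
      y ^ b * 1 ^ (m - b) * (m.choose b : ℝ) + (-1)^(b+m) * y ^ b * 1 ^ (m-b) * (m.choose b : ℝ)
        = (if Even (m - b) then 2*(m.choose b : ℝ) else 0) * y ^ b := by
    intro b hb
    rw [mem_range] at hb
    have hbm : b ≤ m := by omega
    have hiff : Even (b + m) ↔ Even (m - b) := by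
      rw [Nat.even_add, Nat.even_sub hbm]; tauto
    by_cases h : Even (m - b)
    · rw [(hiff.mpr h).neg_one_pow, if_pos h]; ring
    · have hodd : Odd (b + m) := Nat.odd_iff.mpr (by
        rcases Nat.even_or_odd (b+m) with he | ho
        · exact absurd (hiff.mp he) h
        · exact Nat.odd_iff.mp ho)
      rw [hodd.neg_one_pow, if_neg h]; ring
  have hcomb : ∑ b ∈ range (m+1),
      (y ^ b * 1 ^ (m - b) * (m.choose b : ℝ) + (-1)^(b+m) * y ^ b * 1 ^ (m-b) * (m.choose b : ℝ))
        = ∑ b ∈ range (m+1), (if Even (m - b) then 2*(m.choose b : ℝ) else 0) * y ^ b :=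
    Finset.sum_congr rfl key
  rw [Finset.sum_add_distrib, Finset.sum_range_succ
    (f := fun b => (if Even (m - b) then 2*(m.choose b : ℝ) else 0) * y ^ b)] at hcomb
  simp only [Nat.sub_self, Even.zero, if_pos, Nat.choose_self, Nat.cast_one, mul_one] at hcomb
  linarith [hcomb]

lemma fwdDiff_shift (j b : ℕ) (x : ℝ) :
    (fwdDiff (1:ℝ))^[j] (fun y => (y+1) ^ b) x = (fwdDiff (1:ℝ))^[j] (fun y => y ^ b) (x+1) := by
  rw [fwdDiff_iter_eq_sum_shift, fwdDiff_iter_eq_sum_shift]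
  apply Finset.sum_congr rfl
  intro i _
  congr 1
  push_cast [nsmul_eq_mul]
  ring

lemma Sm_rec (k m : ℕ) :
    Sm (k+1) m = ∑ b ∈ range m,
      (if Even (m - b) then 2*(m.choose b : ℝ) else 0) * Sm k b := by
  unfold Sm
  have h1 : 2*(k+1) = 2*k + 2 := by ring
  rw [h1, Function.iterate_add_apply]
  have h2 : (fwdDiff (1:ℝ))^[2] (fun y : ℝ => y ^ m)
      = ∑ b ∈ range m, (if Even (m - b) then 2*(m.choose b : ℝ) else 0) •
          (fun y : ℝ => (y+1) ^ b) := by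
    funext x
    rw [delta2_pow, Finset.sum_apply]
    refine Finset.sum_congr rfl fun b _ => ?_
    rw [Pi.smul_apply, smul_eq_mul]
  rw [h2, fwdDiff_iter_finset_sum]
  rw [Finset.sum_apply]
  apply Finset.sum_congr rfl
  intro b _
  rw [fwdDiff_iter_const_smul]
  rw [Pi.smul_apply, smul_eq_mul]
  congr 1
  have hpt : -(((k+1 : ℕ)) : ℝ) + 1 = -(k:ℝ) := by push_cast; ring
  rw [fwdDiff_shift, hpt]

lemma Sm_nonneg (k m : ℕ) : 0 ≤ Sm k m := by
  induction k generalizing m with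
  | zero =>
      simp only [Sm, Nat.mul_zero, Function.iterate_zero, id_eq, Nat.cast_zero, neg_zero]
      exact pow_nonneg le_rfl m
  | succ k ih =>
      rw [Sm_rec]
      apply Finset.sum_nonneg
      intro b _
      apply mul_nonneg _ (ih b)
      split <;> positivity

lemma Sm_pos (k m : ℕ) (hm : Even m) (hkm : 2*(k+1) ≤ m) : 0 < Sm (k+1) m := by
  induction k generalizing m with
  | zero =>
      rw [Sm_rec]
      apply Finset.sum_pos'
      · intro b _
        apply mul_nonneg _ (Sm_nonneg 0 b)
        split <;> positivity
      · refine ⟨0, Finset.mem_range.mpr (by omega), ?_⟩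
        have h0 : Sm 0 0 = 1 := by
          simp [Sm]
        rw [Nat.sub_zero, if_pos hm, h0, Nat.choose_zero_right]
        norm_num
  | succ k ih =>
      rw [Sm_rec]
      apply Finset.sum_pos'
      · intro b _
        apply mul_nonneg _ (Sm_nonneg (k+1) b)
        split <;> positivity
      · refine ⟨m - 2, Finset.mem_range.mpr (by omega), ?_⟩
        have he2 : Even (m - (m-2)) := by
          rw [show m - (m-2) = 2 from by omega]
          exact even_two
        have he : Even (m - 2) := by
          rw [Nat.even_sub (by omega : 2 ≤ m)]
          simp [hm]
        have hchoose : 0 < (m.choose (m-2) : ℝ) := by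
          exact_mod_cast Nat.choose_pos (by omega : m - 2 ≤ m)
        have hpos : 0 < Sm (k+1) (m-2) := ih (m-2) he (by omega)
        rw [if_pos he2]
        positivity

theorem Sk_moment_nonzero (k n : ℕ) (hk : 0 < k) (hn : Even n) (hkn : 2 * k ≤ n) :
    ∑ j ∈ Finset.range (2 * k + 1),
      (-1 : ℝ) ^ j * (Nat.choose (2 * k) j : ℝ) * ((k : ℝ) - j) ^ n ≠ 0 := by
  obtain ⟨k', rfl⟩ : ∃ k', k = k' + 1 := ⟨k - 1, by omega⟩
  have heq : ∑ j ∈ Finset.range (2 * (k'+1) + 1),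
      (-1 : ℝ) ^ j * (Nat.choose (2 * (k'+1)) j : ℝ) * (((k'+1 : ℕ) : ℝ) - j) ^ n
        = Sm (k'+1) n := by
    unfold Sm
    rw [fwdDiff_iter_eq_sum_shift]
    apply Finset.sum_congr rfl
    intro j hj
    rw [Finset.mem_range] at hj
    have hj' : j ≤ 2 * (k'+1) := by omega
    rw [zsmul_eq_mul]
    push_cast [nsmul_eq_mul]
    have hsign : (-1 : ℝ) ^ (2 * (k'+1) - j) = (-1 : ℝ) ^ j := by
      have hadd : 2 * (k'+1) - j + j = 2 * (k'+1) := by omega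
      have h1 : (-1 : ℝ) ^ (2 * (k'+1) - j) * (-1 : ℝ) ^ j = 1 := by
        rw [← pow_add, hadd, pow_mul]; norm_num
      have h2 : (-1 : ℝ) ^ j * (-1 : ℝ) ^ j = 1 := by
        rw [← pow_add, ← two_mul, pow_mul]; norm_num
      exact mul_right_cancel₀ (pow_ne_zero j (by norm_num)) (h1.trans h2.symm)
    rw [hsign]
    have harg : (-((k' : ℝ)+1) + j * 1) = -( ((k':ℝ)+1) - j ) := by ring
    rw [harg, hn.neg_pow]
  rw [heq]
  exact ne_of_gt (Sm_pos k' n hn hkn)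
end

section
/- For every positive integer k and every odd integer n with n ≥ 2k−1, the sum ∑_{j=0}^{2k-1} (-1)^j · C(2k−1, j) · [(k−j)^n + (k−1−j)^n] is nonzero. -/
open Finset

noncomputable def T (m n : ℕ) : ℝ :=
  ∑ j ∈ range (m + 1), (-1 : ℝ) ^ j * (Nat.choose m j : ℝ) * (((m : ℝ) + 1) / 2 - j) ^ n

lemma diffpow (y : ℝ) (n : ℕ) :
    (y + 1 / 2) ^ n - (y - 1 / 2) ^ n =
      ∑ i ∈ range (n + 1),
        (Nat.choose n i : ℝ) * (1 / 2) ^ (n - i) * (1 - (-1 : ℝ) ^ (n - i)) * y ^ i := by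
  have h2 : y - 1 / 2 = y + (-(1 / 2) : ℝ) := by ring
  rw [h2, add_pow, add_pow, ← Finset.sum_sub_distrib]
  refine sum_congr rfl fun i hi => ?_
  rw [neg_pow]
  ring

lemma Tstep (m n : ℕ) :
    T (m + 1) n = ∑ i ∈ range (n + 1),
      (Nat.choose n i : ℝ) * (1 / 2) ^ (n - i) * (1 - (-1 : ℝ) ^ (n - i)) * T m i := by
  have h1 : ∑ i ∈ range (n + 1),
      (Nat.choose n i : ℝ) * (1 / 2) ^ (n - i) * (1 - (-1 : ℝ) ^ (n - i)) * T m i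
      = ∑ j ∈ range (m + 1), (-1 : ℝ) ^ j * (Nat.choose m j : ℝ) *
          (((((m : ℝ) + 1) / 2 - j) + 1 / 2) ^ n - ((((m : ℝ) + 1) / 2 - j) - 1 / 2) ^ n) := by
    simp only [T, mul_sum]
    rw [Finset.sum_comm]
    refine sum_congr rfl fun j hj => ?_
    rw [diffpow, mul_sum]
    refine sum_congr rfl fun i hi => ?_
    ring
  rw [h1]
  have hsplit : ∑ j ∈ range (m + 1), (-1 : ℝ) ^ j * (Nat.choose m j : ℝ) *
          (((((m : ℝ) + 1) / 2 - j) + 1 / 2) ^ n - ((((m : ℝ) + 1) / 2 - j) - 1 / 2) ^ n)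
      = (∑ j ∈ range (m + 1), (-1 : ℝ) ^ j * (Nat.choose m j : ℝ) *
            (((m : ℝ) + 2) / 2 - j) ^ n)
        - ∑ j ∈ range (m + 1), (-1 : ℝ) ^ j * (Nat.choose m j : ℝ) *
            (((m : ℝ) + 2) / 2 - (j + 1)) ^ n := by
    rw [← Finset.sum_sub_distrib]
    refine sum_congr rfl fun j hj => ?_
    ring_nf
  rw [hsplit]
  have hA : ∑ j ∈ range (m + 1), (-1 : ℝ) ^ j * (Nat.choose m j : ℝ) *
        (((m : ℝ) + 2) / 2 - j) ^ n
      = (∑ i ∈ range (m + 1), (-1 : ℝ) ^ (i + 1) * (Nat.choose m (i + 1) : ℝ) *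
          (((m : ℝ) + 2) / 2 - (i + 1)) ^ n) + (((m : ℝ) + 2) / 2) ^ n := by
    rw [Finset.sum_range_succ' (fun j => (-1 : ℝ) ^ j * (Nat.choose m j : ℝ) *
        (((m : ℝ) + 2) / 2 - j) ^ n) m]
    rw [Finset.sum_range_succ]
    simp [Nat.choose_succ_self]
  rw [hA]
  unfold T
  rw [Finset.sum_range_succ']
  have hcomb : (∑ i ∈ range (m + 1), (-1 : ℝ) ^ (i + 1) * (Nat.choose m (i + 1) : ℝ) *
          (((m : ℝ) + 2) / 2 - (i + 1)) ^ n) + (((m : ℝ) + 2) / 2) ^ n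
        - ∑ j ∈ range (m + 1), (-1 : ℝ) ^ j * (Nat.choose m j : ℝ) *
            (((m : ℝ) + 2) / 2 - (j + 1)) ^ n
      = (∑ i ∈ range (m + 1),
          ((-1 : ℝ) ^ (i + 1) * (Nat.choose m (i + 1) : ℝ) *
            (((m : ℝ) + 2) / 2 - (i + 1)) ^ n
           - (-1 : ℝ) ^ i * (Nat.choose m i : ℝ) *
            (((m : ℝ) + 2) / 2 - (i + 1)) ^ n)) + (((m : ℝ) + 2) / 2) ^ n := by
    rw [Finset.sum_sub_distrib]
    ring
  rw [hcomb]
  congr 1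
  · refine sum_congr rfl fun i hi => ?_
    rw [Nat.choose_succ_succ]
    push_cast
    ring
  · have h0 : ((m : ℝ) + 1 + 1) = (m : ℝ) + 2 := by ring
    simp [Nat.choose_zero_right, h0]

lemma Tnonneg : ∀ m n, 0 ≤ T m n := by
  intro m
  induction m with
  | zero =>
    intro n
    have h : T 0 n = (1 / 2 : ℝ) ^ n := by
      simp [T]
    rw [h]
    positivity
  | succ m ih =>
    intro n
    rw [Tstep]
    refine sum_nonneg fun i hi => ?_
    have h1 : (0 : ℝ) ≤ 1 - (-1 : ℝ) ^ (n - i) := by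
      rcases Nat.even_or_odd (n - i) with h | h
      · rw [h.neg_one_pow]; norm_num
      · rw [h.neg_one_pow]; norm_num
    have h2 := ih i
    positivity

lemma Tpos : ∀ m n, m ≤ n → 0 < T m n := by
  intro m
  induction m with
  | zero =>
    intro n _
    have h : T 0 n = (1 / 2 : ℝ) ^ n := by
      simp [T]
    rw [h]
    positivity
  | succ m ih =>
    intro n hmn
    have hn1 : 1 ≤ n := le_trans (Nat.succ_le_succ (Nat.zero_le m)) hmn
    rw [Tstep]
    refine Finset.sum_pos' (fun i hi => ?_) ⟨n - 1, ?_, ?_⟩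
    · have h1 : (0 : ℝ) ≤ 1 - (-1 : ℝ) ^ (n - i) := by
        rcases Nat.even_or_odd (n - i) with h | h
        · rw [h.neg_one_pow]; norm_num
        · rw [h.neg_one_pow]; norm_num
      have h2 := Tnonneg m i
      positivity
    · exact mem_range.mpr (by omega)
    · have h1 : n - (n - 1) = 1 := by omega
      rw [h1]
      have h2 : (0 : ℝ) < 1 - (-1 : ℝ) ^ 1 := by norm_num
      have h3 : 0 < T m (n - 1) := ih (n - 1) (by omega)
      have h4 : (0 : ℝ) < (Nat.choose n (n - 1) : ℝ) := by
        exact_mod_cast Nat.choose_pos (by omega)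
      positivity

theorem Tk_moment_nonzero (k n : ℕ) (hk : 0 < k) (hn : Odd n) (hkn : 2 * k - 1 ≤ n) :
    ∑ j ∈ Finset.range (2 * k),
      (-1 : ℝ) ^ j * (Nat.choose (2 * k - 1) j : ℝ) *
        (((k : ℝ) - j) ^ n + ((k : ℝ) - 1 - j) ^ n) ≠ 0 := by
  set m := 2 * k - 1 with hm
  have hmk : 2 * k = m + 1 := by omega
  have hmcast : (m : ℝ) + 1 = 2 * k := by
    have : ((2 * k : ℕ) : ℝ) = ((m + 1 : ℕ) : ℝ) := by rw [hmk]
    push_cast at this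
    linarith
  -- split the sum
  have hsplit : ∑ j ∈ Finset.range (2 * k),
      (-1 : ℝ) ^ j * (Nat.choose m j : ℝ) *
        (((k : ℝ) - j) ^ n + ((k : ℝ) - 1 - j) ^ n)
      = (∑ j ∈ range (m + 1), (-1 : ℝ) ^ j * (Nat.choose m j : ℝ) * ((k : ℝ) - j) ^ n)
        + ∑ j ∈ range (m + 1), (-1 : ℝ) ^ j * (Nat.choose m j : ℝ) * ((k : ℝ) - 1 - j) ^ n := by
    rw [hmk, ← Finset.sum_add_distrib]
    refine sum_congr rfl fun j hj => ?_
    ring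
  have hS1 : ∑ j ∈ range (m + 1), (-1 : ℝ) ^ j * (Nat.choose m j : ℝ) * ((k : ℝ) - j) ^ n
      = T m n := by
    unfold T
    refine sum_congr rfl fun j hj => ?_
    rw [hmcast]
    ring_nf
  have hS2 : ∑ j ∈ range (m + 1), (-1 : ℝ) ^ j * (Nat.choose m j : ℝ) * ((k : ℝ) - 1 - j) ^ n
      = T m n := by
    rw [← Finset.sum_range_reflect]
    unfold T
    refine sum_congr rfl fun j hj => ?_
    have hj' : j ≤ m := by
      have := mem_range.mp hj; omega
    have hrefl : m + 1 - 1 - j = m - j := by omega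
    rw [hrefl]
    have hcast : ((m - j : ℕ) : ℝ) = (m : ℝ) - j := by
      push_cast [Nat.cast_sub hj']
      ring
    rw [Nat.choose_symm hj', hcast]
    have hpow : (-1 : ℝ) ^ (m - j) = (-1 : ℝ) ^ m * (-1 : ℝ) ^ j := by
      have e1 : (-1 : ℝ) ^ (m - j) * (-1 : ℝ) ^ j = (-1 : ℝ) ^ m := by
        rw [← pow_add, Nat.sub_add_cancel hj']
      have e2 : (-1 : ℝ) ^ j * (-1 : ℝ) ^ j = 1 := by
        rw [← pow_add]
        exact Even.neg_one_pow ⟨j, rfl⟩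
      calc (-1 : ℝ) ^ (m - j) = (-1 : ℝ) ^ (m - j) * ((-1 : ℝ) ^ j * (-1 : ℝ) ^ j) := by
            rw [e2, mul_one]
        _ = ((-1 : ℝ) ^ (m - j) * (-1 : ℝ) ^ j) * (-1 : ℝ) ^ j := by ring
        _ = (-1 : ℝ) ^ m * (-1 : ℝ) ^ j := by rw [e1]
    rw [hpow]
    have hmodd : Odd m := by
      refine ⟨k - 1, ?_⟩
      omega
    rw [hmodd.neg_one_pow]
    have harg : (k : ℝ) - 1 - ((m : ℝ) - j) = -(((m : ℝ) + 1) / 2 - j) := by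
      have hm2 : (m : ℝ) = 2 * (k : ℝ) - 1 := by linarith
      rw [hm2]
      ring
    rw [harg, hn.neg_pow]
    ring
  have hpos : 0 < T m n := Tpos m n (by omega)
  rw [hsplit, hS1, hS2]
  linarith
end

section
/- If a function f and a point c satisfy that both limits lim_{h→0} [f(c+h) − f(c−h)]/h and lim_{h→0} [f(c+h) − 2f(c) + f(c−h)]/h exist (as finite real numbers), then f is differentiable at c. -/
open Filter Topology

/-- If both the symmetric first difference quotient and the second-difference-over-h
quotient of `f` at `c` have finite limits as `h → 0`, then `f` is differentiable at `c`. -/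
theorem differentiable_of_two_smoothness_conditions (f : ℝ → ℝ) (c : ℝ)
    (h1 : ∃ L : ℝ, Tendsto (fun h : ℝ => (f (c + h) - f (c - h)) / h) (𝓝[≠] 0) (𝓝 L))
    (h2 : ∃ M : ℝ, Tendsto (fun h : ℝ => (f (c + h) - 2 * f c + f (c - h)) / h)
      (𝓝[≠] 0) (𝓝 M)) :
    DifferentiableAt ℝ f c := by
  obtain ⟨L, hL⟩ := h1
  obtain ⟨M, hM⟩ := h2
  -- the ordinary difference quotient tends to (L+M)/2
  have key : Tendsto (fun h : ℝ => (f (c + h) - f c) / h) (𝓝[≠] 0) (𝓝 ((L + M) / 2)) := by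
    have := (hL.add hM).div_const 2
    refine this.congr' ?_
    filter_upwards [self_mem_nhdsWithin] with h hh
    have hh' : (h : ℝ) ≠ 0 := hh
    field_simp
    ring
  -- translate to slope and conclude
  have hsub : Tendsto (fun x : ℝ => x - c) (𝓝[≠] c) (𝓝[≠] 0) := by
    refine tendsto_nhdsWithin_of_tendsto_nhds_of_eventually_within _ ?_ ?_
    · have h0 : Tendsto (fun x : ℝ => x - c) (𝓝 c) (𝓝 (c - c)) := tendsto_id.sub_const c
      simpa using h0.mono_left nhdsWithin_le_nhds
    · filter_upwards [self_mem_nhdsWithin] with x hx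
      simpa [sub_eq_zero] using hx
  have hslope : Tendsto (slope f c) (𝓝[≠] c) (𝓝 ((L + M) / 2)) := by
    have := key.comp hsub
    refine this.congr ?_
    intro x
    simp [slope, Function.comp, vsub_eq_sub, div_eq_inv_mul]
  have : HasDerivAt f ((L + M) / 2) c := hasDerivAt_iff_tendsto_slope.mpr hslope
  exact this.differentiableAt
end

section
/- Let n ≥ 2 and let {D_α} be a finite collection of differences centered at c, each of order at least n. Then there exists a measurable function f that is (n−2) times Peano differentiable at c, satisfies D_α(h)(f) = 0 for all α and all h, but is not n times Peano differentiable at c. -/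
open Filter Topology Asymptotics Finset

/-- `f` is `m` times Peano differentiable at `c`: there is a polynomial `p` of degree
at most `m` with `f (c + h) - p (c + h) = o(hᵐ)` as `h → 0`. -/
def PeanoDifferentiable (m : ℕ) (f : ℝ → ℝ) (c : ℝ) : Prop :=
  ∃ p : Polynomial ℝ, p.degree ≤ (m : ℕ∞) ∧
    (fun h : ℝ => f (c + h) - p.eval (c + h)) =o[𝓝[≠] (0:ℝ)] fun h => h ^ m

/-- A difference centered at `c`: nonzero coefficients and distinct nodes. -/
structure DifferenceAt (c : ℝ) where
  m : ℕ
  a : Fin (m + 1) → ℝ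
  b : Fin (m + 1) → ℝ
  a_ne : ∀ i, a i ≠ 0
  b_inj : Function.Injective b

/-- The value of the difference applied to `f` at increment `h`. -/
def DifferenceAt.apply {c : ℝ} (D : DifferenceAt c) (f : ℝ → ℝ) (h : ℝ) : ℝ :=
  ∑ i, D.a i * f (c + D.b i * h)

/-- The difference has order at least `n`. -/
def DifferenceAt.orderAtLeast {c : ℝ} (D : DifferenceAt c) (n : ℕ) : Prop :=
  ∀ k < n, ∑ i, D.a i * D.b i ^ k = 0

lemma poly_zero_of_littleO : ∀ (n : ℕ) (q : Polynomial ℝ) (u : ℕ → ℝ),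
    (∀ j, u j ≠ 0) → Tendsto u atTop (𝓝 0) → q.natDegree ≤ n →
    ((fun j => q.eval (u j)) =o[atTop] fun j => u j ^ n) → q = 0 := by
  intro n
  induction n with
  | zero =>
    intro q u hu0 hut hdeg ho
    have hq := Polynomial.eq_C_of_natDegree_le_zero hdeg
    simp only [pow_zero] at ho
    rw [isLittleO_one_iff] at ho
    have h2 : Tendsto (fun _ : ℕ => q.coeff 0) atTop (𝓝 (q.coeff 0)) := tendsto_const_nhds
    have h3 : (fun j => q.eval (u j)) = fun _ : ℕ => q.coeff 0 := by
      funext j; rw [hq]; simp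
    rw [h3] at ho
    have heq := tendsto_nhds_unique ho h2
    rw [hq, ← heq, map_zero]
  | succ n ih =>
    intro q u hu0 hut hdeg ho
    have hlim : Tendsto (fun j => q.eval (u j)) atTop (𝓝 0) := by
      refine ho.isBigO.trans_tendsto ?_
      have := hut.pow (n + 1)
      simpa [zero_pow (Nat.succ_ne_zero n)] using this
    have hlim2 : Tendsto (fun j => q.eval (u j)) atTop (𝓝 (q.eval 0)) :=
      (q.continuous_aeval.tendsto 0).comp hut
    have hc0 : q.coeff 0 = 0 := by
      rw [Polynomial.coeff_zero_eq_eval_zero]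
      exact (tendsto_nhds_unique hlim2 hlim)
    obtain ⟨r, hr⟩ := (Polynomial.X_dvd_iff).mpr hc0
    have hrdeg : r.natDegree ≤ n := by
      rcases eq_or_ne r 0 with h | h
      · simp [h]
      · have : q ≠ 0 := by
          rw [hr]; exact mul_ne_zero Polynomial.X_ne_zero h
        have := hdeg
        rw [hr, Polynomial.natDegree_mul Polynomial.X_ne_zero h, Polynomial.natDegree_X] at this
        omega
    have hro : (fun j => r.eval (u j)) =o[atTop] fun j => u j ^ n := by
      rw [isLittleO_iff] at ho ⊢
      intro ε hε
      filter_upwards [ho hε] with j hj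
      rw [hr] at hj
      simp only [Polynomial.eval_mul, Polynomial.eval_X] at hj
      rw [Real.norm_eq_abs, Real.norm_eq_abs, abs_mul, pow_succ, abs_mul, ← mul_assoc] at hj
      rw [mul_comm (|u j|) (|r.eval (u j)|)] at hj
      rw [Real.norm_eq_abs, Real.norm_eq_abs]
      exact le_of_mul_le_mul_right hj (abs_pos.mpr (hu0 j))
    have := ih r u hu0 hut hrdeg hro
    rw [hr, this, mul_zero]

lemma exists_notMem_small (G : Set ℝ) (hG : G.Countable) (j : ℕ) :
    ∃ x : ℝ, 0 < x ∧ x < 1 / (j + 1) ∧ x ∉ G := by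
  have hlt : (0:ℝ) < 1 / (j + 1) := by positivity
  have hns : ¬ Set.Ioo (0:ℝ) (1 / (j + 1)) ⊆ G := by
    intro hsub
    have hcnt : (Set.Ioo (0:ℝ) (1 / (j + 1))).Countable := hG.mono hsub
    rw [← Cardinal.le_aleph0_iff_set_countable, Cardinal.mk_Ioo_real hlt] at hcnt
    exact absurd hcnt Cardinal.aleph0_lt_continuum.not_ge
  obtain ⟨x, hx, hxG⟩ := Set.not_subset.mp hns
  exact ⟨x, hx.1, hx.2, hxG⟩

/-- For a finite collection of differences of order at least `n ≥ 2` centered at `c`,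
there is a measurable function, `(n-2)` times Peano differentiable at `c`, killed by
every difference in the collection, which is not `n` times Peano differentiable at `c`. -/
theorem exists_killed_function_order_n (n : ℕ) (hn : 2 ≤ n) (c : ℝ)
    (ι : Type) [Fintype ι] (D : ι → DifferenceAt c)
    (hord : ∀ α, (D α).orderAtLeast n) :
    ∃ f : ℝ → ℝ, Measurable f ∧ PeanoDifferentiable (n - 2) f c ∧
      (∀ α, ∀ h : ℝ, (D α).apply f h = 0) ∧ ¬ PeanoDifferentiable n f c := by
  classical
  set S : Set ℝ := {x | x ≠ 0 ∧ (x = 2 ∨ ∃ α i, (D α).b i = x)} with hSdef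
  set S' : Set ℝ := S ∪ Inv.inv '' S with hS'def
  set G : Submonoid ℝ := Submonoid.closure S' with hGdef
  have hS'G : S' ⊆ (G : Set ℝ) := Submonoid.subset_closure
  have hmem : ∀ x ∈ S, x ∈ G ∧ x⁻¹ ∈ G := fun x hx =>
    ⟨hS'G (Or.inl hx), hS'G (Or.inr ⟨x, hx, rfl⟩)⟩
  have hle : G ≤ nonZeroDivisors ℝ := by
    rw [hGdef]
    apply Submonoid.closure_le.mpr
    rintro x (hx | ⟨y, hy, rfl⟩)
    · exact mem_nonZeroDivisors_iff_ne_zero.mpr hx.1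
    · exact mem_nonZeroDivisors_iff_ne_zero.mpr (inv_ne_zero hy.1)
  have hzero : (0:ℝ) ∉ G := fun h =>
    (mem_nonZeroDivisors_iff_ne_zero.mp (hle h)) rfl
  have hGmul : ∀ x ∈ S, ∀ h : ℝ, (x * h ∈ G ↔ h ∈ G) := by
    intro x hx h
    constructor
    · intro hxh
      have := G.mul_mem (hmem x hx).2 hxh
      rwa [inv_mul_cancel_left₀ hx.1] at this
    · intro hh
      exact G.mul_mem (hmem x hx).1 hh
  have hScount : S.Countable := by
    have hsub : S ⊆ insert (2:ℝ) (⋃ α, Set.range (D α).b) := by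
      rintro x ⟨-, h2 | ⟨α, i, rfl⟩⟩
      · exact Or.inl h2
      · exact Or.inr (Set.mem_iUnion.mpr ⟨α, Set.mem_range_self i⟩)
    exact Set.Countable.mono hsub
      ((Set.countable_iUnion fun α => Set.countable_range _).insert 2)
  have hS'count : S'.Countable := hScount.union (hScount.image _)
  have hGcount : (G : Set ℝ).Countable := by
    rw [hGdef, Submonoid.closure_eq_image_prod]
    apply Set.Countable.image
    have : Countable ↥S' := hS'count.to_subtype
    have hsub : {l : List ℝ | ∀ x ∈ l, x ∈ S'} ⊆
        Set.range (fun l : List ↥S' => l.map Subtype.val) := by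
      intro l hl
      refine ⟨l.attach.map (fun x => ⟨x.1, hl x.1 x.2⟩), ?_⟩
      simp [List.map_map, Function.comp_def]
    exact (Set.countable_range _).mono hsub
  set f : ℝ → ℝ := fun x => if x - c ∈ G then (x - c) ^ (n - 1) else 0 with hfdef
  have hn1 : n - 1 ≠ 0 := by omega
  have hfval : ∀ h : ℝ, f (c + h) = if h ∈ G then h ^ (n - 1) else 0 := by
    intro h; rw [hfdef]; simp only [add_sub_cancel_left]
  refine ⟨f, ?_, ?_, ?_, ?_⟩
  · -- measurable
    have hmg : MeasurableSet {x : ℝ | x - c ∈ G} :=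
      (measurable_id.sub_const c) hGcount.measurableSet
    exact Measurable.ite hmg ((measurable_id.sub_const c).pow_const _) measurable_const
  · -- Peano differentiable n-2
    refine ⟨0, by rw [Polynomial.degree_zero]; exact bot_le, ?_⟩
    rw [isLittleO_iff]
    intro ε hε
    filter_upwards [eventually_nhdsWithin_of_eventually_nhds
      (eventually_abs_sub_lt (0:ℝ) hε)] with h hh
    simp only [Polynomial.eval_zero, sub_zero]
    rw [sub_zero] at hh
    have key : |f (c + h)| ≤ |h| ^ (n - 1) := by
      rw [hfval h]
      split
      · rw [abs_pow]
      · simp [pow_nonneg (abs_nonneg h)]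
    have hnn : n - 1 = (n - 2) + 1 := by omega
    calc ‖f (c + h)‖ = |f (c + h)| := rfl
      _ ≤ |h| ^ (n - 1) := key
      _ = |h| * |h| ^ (n - 2) := by rw [hnn, pow_succ, mul_comm]
      _ ≤ ε * |h| ^ (n - 2) := by
          exact mul_le_mul_of_nonneg_right hh.le (pow_nonneg (abs_nonneg h) _)
      _ = ε * ‖h ^ (n - 2)‖ := by rw [Real.norm_eq_abs, abs_pow]
  · -- killed by differences
    intro α h
    unfold DifferenceAt.apply
    have hnode : ∀ i, (D α).b i ≠ 0 → (D α).b i ∈ S := fun i hi => ⟨hi, Or.inr ⟨α, i, rfl⟩⟩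
    have hfi : ∀ i, f (c + (D α).b i * h)
        = (if h ∈ G then h ^ (n - 1) else 0) * (D α).b i ^ (n - 1) := by
      intro i
      rw [hfval]
      by_cases hb : (D α).b i = 0
      · rw [hb, zero_mul, zero_pow hn1, mul_zero, if_neg hzero]
      · rw [if_congr (hGmul _ (hnode i hb) h) rfl rfl]
        split
        · rw [mul_pow, mul_comm]
        · rw [zero_mul]
    simp only [hfi]
    have hsum := hord α (n - 1) (by omega)
    calc ∑ i, (D α).a i * ((if h ∈ G then h ^ (n - 1) else 0) * (D α).b i ^ (n - 1))
        = (if h ∈ G then h ^ (n - 1) else 0) * ∑ i, (D α).a i * (D α).b i ^ (n - 1) := by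
          rw [Finset.mul_sum]; exact Finset.sum_congr rfl fun i _ => by ring
      _ = 0 := by rw [hsum, mul_zero]
  · -- not n times Peano differentiable
    rintro ⟨p, hdeg, ho⟩
    choose u hu1 hu2 hu3 using fun j => exists_notMem_small (G : Set ℝ) hGcount j
    have hu0 : ∀ j, u j ≠ 0 := fun j => ne_of_gt (hu1 j)
    have h0 : Tendsto u atTop (𝓝 0) := by
      refine squeeze_zero (fun j => (hu1 j).le) (fun j => (hu2 j).le) ?_
      exact tendsto_one_div_add_atTop_nhds_zero_nat
    have hut : Tendsto u atTop (𝓝[≠] (0:ℝ)) :=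
      tendsto_nhdsWithin_of_tendsto_nhds_of_eventually_within _ h0
        (Eventually.of_forall fun j => hu0 j)
    have hcomp := ho.comp_tendsto hut
    have hf0 : ∀ j, f (c + u j) = 0 := fun j => by rw [hfval]; exact if_neg (fun hh => hu3 j hh)
    set q : Polynomial ℝ := p.comp (Polynomial.X + Polynomial.C c) with hq
    have hqe : ∀ x : ℝ, q.eval x = p.eval (c + x) := by
      intro x; rw [hq]; simp [add_comm]
    have hpdeg : p.natDegree ≤ n := Polynomial.natDegree_le_iff_degree_le.mpr hdeg
    have hqdeg : q.natDegree ≤ n := by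
      rw [hq, Polynomial.natDegree_comp]
      simpa using hpdeg
    have hqo : (fun j => q.eval (u j)) =o[atTop] fun j => u j ^ n := by
      have h1 : (fun j => f (c + u j) - p.eval (c + u j)) =o[atTop] fun j => u j ^ n := hcomp
      have h2 : (fun j => q.eval (u j)) = fun j => -(f (c + u j) - p.eval (c + u j)) := by
        funext j; rw [hqe, hf0 j, zero_sub, neg_neg]
      rw [h2]
      exact h1.neg_left
    have hq0 : q = 0 := poly_zero_of_littleO n q u hu0 h0 hqdeg hqo
    have hp0 : ∀ y : ℝ, p.eval y = 0 := by
      intro y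
      have := hqe (y - c)
      rw [hq0, add_sub_cancel] at this
      simpa using this.symm
    have hoo : (fun h : ℝ => f (c + h)) =o[𝓝[≠] (0:ℝ)] fun h => h ^ n := by
      have : (fun h : ℝ => f (c + h)) = fun h => f (c + h) - p.eval (c + h) := by
        funext h; rw [hp0, sub_zero]
      rw [this]; exact ho
    set v : ℕ → ℝ := fun j => (2:ℝ)⁻¹ ^ j with hv
    have h2S : (2:ℝ) ∈ S := ⟨two_ne_zero, Or.inl rfl⟩
    have hvG : ∀ j, v j ∈ G := fun j => pow_mem (hmem 2 h2S).2 j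
    have hv0 : ∀ j, 0 < v j := fun j => pow_pos (by norm_num) j
    have hvt : Tendsto v atTop (𝓝[≠] (0:ℝ)) := by
      refine tendsto_nhdsWithin_of_tendsto_nhds_of_eventually_within _ ?_
        (Eventually.of_forall fun j => ne_of_gt (hv0 j))
      exact tendsto_pow_atTop_nhds_zero_of_lt_one (by norm_num) (by norm_num)
    have hcomp2 := hoo.comp_tendsto hvt
    rw [isLittleO_iff] at hcomp2
    obtain ⟨j, hj⟩ := (hcomp2 (by norm_num : (0:ℝ) < 1/2)).exists
    have hfv : f (c + v j) = v j ^ (n - 1) := by rw [hfval, if_pos (hvG j)]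
    simp only [Function.comp_apply] at hj
    rw [hfv] at hj
    have hv1 : v j ≤ 1 := by
      rw [hv]
      exact pow_le_one₀ (by norm_num) (by norm_num)
    rw [Real.norm_eq_abs, Real.norm_eq_abs, abs_of_pos (pow_pos (hv0 j) _),
      abs_of_pos (pow_pos (hv0 j) _)] at hj
    have hnn : n = (n - 1) + 1 := by omega
    have he : v j ^ n = v j ^ (n - 1) * v j := by
      conv_lhs => rw [hnn]
      rw [pow_succ]
    nlinarith [pow_pos (hv0 j) (n - 1), hv0 j]
end

section
/- Let n ≥ 2 and let {D_α} be a finite collection of differences centered at c, each of order strictly greater than n. Then there exists a measurable function f that is (n−1) times Peano differentiable at c, satisfies D_α(h)(f) = 0 for all α and all h, but is not n times Peano differentiable at c. -/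
open Filter Topology Asymptotics Finset

section
variable (n : ℕ) (c : ℝ) (ι : Type) [Fintype ι] (D : ι → DifferenceAt c)

-- node units
noncomputable def nodeU : Option ((α : ι) × Fin ((D α).m + 1)) → ℝˣ := fun k =>
  k.elim (Units.mk0 2 two_ne_zero)
    (fun j => if hb : (D j.1).b j.2 = 0 then 1 else Units.mk0 _ hb)

noncomputable def Gset : Set ℝˣ :=
  Set.range (fun e : Option ((α : ι) × Fin ((D α).m + 1)) → ℤ => ∏ k, nodeU c ι D k ^ e k)

lemma one_mem_Gset : 1 ∈ Gset c ι D := ⟨0, by simp⟩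

lemma zpow_mul_mem_Gset (j : Option ((α : ι) × Fin ((D α).m + 1))) (d : ℤ) {z : ℝˣ}
    (hz : z ∈ Gset c ι D) : nodeU c ι D j ^ d * z ∈ Gset c ι D := by
  classical
  obtain ⟨e, rfl⟩ := hz
  refine ⟨fun k => (if k = j then d else 0) + e k, ?_⟩
  simp only [zpow_add]
  rw [Finset.prod_mul_distrib]
  congr 1
  have : ∀ k, nodeU c ι D k ^ (if k = j then d else 0) =
      if k = j then nodeU c ι D k ^ d else 1 := by
    intro k; split <;> simp
  rw [Finset.prod_congr rfl (fun k _ => this k), Finset.prod_ite_eq' Finset.univ j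
    (fun k => nodeU c ι D k ^ d), if_pos (Finset.mem_univ j)]

noncomputable def Sset : Set ℝ := (fun u : ℝˣ => (u : ℝ)) '' Gset c ι D

lemma Sset_countable : (Sset c ι D).Countable :=
  (Set.countable_range _).image _

lemma zero_not_mem_Sset : (0 : ℝ) ∉ Sset c ι D := by
  rintro ⟨u, -, hu⟩; exact u.ne_zero hu

lemma mem_Sset_iff_mul (α : ι) (i : Fin ((D α).m + 1)) (hb : (D α).b i ≠ 0) (h : ℝ) :
    h ∈ Sset c ι D ↔ (D α).b i * h ∈ Sset c ι D := by
  have hv : ((nodeU c ι D (some ⟨α, i⟩) : ℝˣ) : ℝ) = (D α).b i := by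
    simp [nodeU, hb]
  constructor
  · rintro ⟨z, hz, rfl⟩
    exact ⟨nodeU c ι D (some ⟨α, i⟩) ^ (1 : ℤ) * z,
      zpow_mul_mem_Gset c ι D _ 1 hz, by simp [hv]⟩
  · rintro ⟨w, hw, hweq⟩
    refine ⟨nodeU c ι D (some ⟨α, i⟩) ^ (-1 : ℤ) * w,
      zpow_mul_mem_Gset c ι D _ (-1) hw, ?_⟩
    have : ((nodeU c ι D (some ⟨α, i⟩) : ℝˣ) : ℝ) ≠ 0 := by rw [hv]; exact hb
    show ((nodeU c ι D (some ⟨α, i⟩) ^ (-1 : ℤ) * w : ℝˣ) : ℝ) = h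
    simp only at hweq
    rw [Units.val_mul, Units.val_zpow_eq_zpow_val, hv, hweq, zpow_neg, zpow_one]
    field_simp

lemma half_pow_mem_Sset (k : ℕ) : ((1:ℝ)/2) ^ (k+1) ∈ Sset c ι D := by
  refine ⟨nodeU c ι D none ^ (-(k+1:ℕ) : ℤ) * 1,
    zpow_mul_mem_Gset c ι D none _ (one_mem_Gset c ι D), ?_⟩
  show ((nodeU c ι D none ^ (-(k+1:ℕ) : ℤ) * 1 : ℝˣ) : ℝ) = _
  rw [Units.val_mul, Units.val_one, mul_one, Units.val_zpow_eq_zpow_val]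
  show (2:ℝ) ^ (-(k+1:ℕ) : ℤ) = _
  rw [zpow_neg, zpow_natCast, ← inv_pow, one_div]

end

lemma poly_zero_of_tendsto (n : ℕ) (Q : Polynomial ℝ) (s : ℕ → ℝ)
    (hs0 : ∀ k, s k ≠ 0) (hs : Tendsto s atTop (𝓝 0))
    (hdeg : Q.natDegree ≤ n)
    (hlim : Tendsto (fun k => Q.eval (s k) / (s k) ^ n) atTop (𝓝 0)) : Q = 0 := by
  induction n generalizing Q with
  | zero =>
    obtain ⟨a, rfl⟩ := Polynomial.natDegree_eq_zero.mp (Nat.le_zero.mp hdeg)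
    simp only [Polynomial.eval_C, pow_zero, div_one] at hlim
    have := tendsto_nhds_unique hlim tendsto_const_nhds
    simp [this]
  | succ n ih =>
    have heval0 : Tendsto (fun k => Q.eval (s k)) atTop (𝓝 0) := by
      have := hlim.mul (hs.pow (n+1))
      simp only [zero_mul] at this
      exact this.congr fun k => div_mul_cancel₀ _ (pow_ne_zero _ (hs0 k))
    have hc0 : Q.coeff 0 = 0 := by
      have hcont : Tendsto (fun k => Q.eval (s k)) atTop (𝓝 (Q.eval 0)) :=
        (Q.continuous_aeval.tendsto 0).comp hs
      have := tendsto_nhds_unique hcont heval0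
      simpa [Polynomial.eval_zero, ← Polynomial.coeff_zero_eq_eval_zero] using this
    obtain ⟨R, rfl⟩ := Polynomial.X_dvd_iff.mpr hc0
    rcases eq_or_ne R 0 with rfl | hR
    · simp
    · have hdegR : R.natDegree ≤ n := by
        have h2 := Polynomial.natDegree_mul (Polynomial.X_ne_zero (R := ℝ)) hR
        rw [h2] at hdeg
        simp only [Polynomial.natDegree_X] at hdeg
        omega
      have : R = 0 := ih R hdegR (hlim.congr fun k => by
        rw [Polynomial.eval_mul, Polynomial.eval_X, pow_succ']
        rw [mul_div_mul_left _ _ (hs0 k)])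
      exact absurd this hR

/-- For a finite collection of differences of order greater than `n ≥ 2` centered at `c`,
there is a measurable function, `(n-1)` times Peano differentiable at `c`, killed by
every difference in the collection, which is not `n` times Peano differentiable at `c`. -/
theorem exists_killed_function_order_gt_n (n : ℕ) (hn : 2 ≤ n) (c : ℝ)
    (ι : Type) [Fintype ι] (D : ι → DifferenceAt c)
    (hord : ∀ α, (D α).orderAtLeast (n + 1)) :
    ∃ f : ℝ → ℝ, Measurable f ∧ PeanoDifferentiable (n - 1) f c ∧
      (∀ α, ∀ h : ℝ, (D α).apply f h = 0) ∧ ¬ PeanoDifferentiable n f c := by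
  classical
  set S : Set ℝ := Sset c ι D with hS
  set f : ℝ → ℝ := Set.indicator {x : ℝ | x - c ∈ S} (fun x => (x - c) ^ n) with hfdef
  have hf : ∀ h : ℝ, f (c + h) = if h ∈ S then h ^ n else 0 := by
    intro h
    simp [hfdef, Set.indicator, add_sub_cancel_left]
  refine ⟨f, ?_, ?_, ?_, ?_⟩
  · -- Measurable
    have hset : MeasurableSet {x : ℝ | x - c ∈ S} := by
      have hc : ({x : ℝ | x - c ∈ S}).Countable := by
        have : {x : ℝ | x - c ∈ S} = (fun y => y + c) '' S := by
          ext x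
          simp only [Set.mem_setOf_eq, Set.mem_image]
          constructor
          · intro hx; exact ⟨x - c, hx, by ring⟩
          · rintro ⟨y, hy, rfl⟩; simpa using hy
        rw [this]
        exact (Sset_countable c ι D).image _
      exact hc.measurableSet
    exact ((measurable_id.sub_const c).pow_const n).indicator hset
  · -- Peano (n-1)
    refine ⟨0, by rw [Polynomial.degree_zero]; exact bot_le, ?_⟩
    simp only [Polynomial.eval_zero, sub_zero]
    have h1 : (fun h : ℝ => f (c + h)) =O[𝓝[≠] (0:ℝ)] fun h => h ^ n := by
      apply isBigO_of_le
      intro h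
      rw [hf h]
      split
      · simp
      · simp [abs_nonneg]
    exact h1.trans_isLittleO ((isLittleO_pow_pow (by omega : n - 1 < n)).mono
      nhdsWithin_le_nhds)
  · -- killed by differences
    intro α h
    unfold DifferenceAt.apply
    by_cases hhS : h ∈ S
    · have hterm : ∀ i, (D α).a i * f (c + (D α).b i * h) =
          ((D α).a i * (D α).b i ^ n) * h ^ n := by
        intro i
        rw [hf]
        by_cases hb : (D α).b i = 0
        · rw [hb]
          simp [if_neg (by simpa using zero_not_mem_Sset c ι D),
            zero_pow (by omega : n ≠ 0)]
        · rw [if_pos ((mem_Sset_iff_mul c ι D α i hb h).mp hhS), mul_pow]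
          ring
      rw [Finset.sum_congr rfl fun i _ => hterm i, ← Finset.sum_mul,
        hord α n (by omega), zero_mul]
    · have hterm : ∀ i, f (c + (D α).b i * h) = 0 := by
        intro i
        rw [hf, if_neg]
        intro hmem
        by_cases hb : (D α).b i = 0
        · rw [hb, zero_mul] at hmem
          exact zero_not_mem_Sset c ι D hmem
        · exact hhS ((mem_Sset_iff_mul c ι D α i hb h).mpr hmem)
      simp [hterm]
  · -- not Peano n
    rintro ⟨p, hpdeg, hpo⟩
    -- choose a sequence outside S
    have hex : ∀ k : ℕ, ∃ x : ℝ, x ∈ Set.Ioo (0:ℝ) (1/(k+1)) \ S := by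
      intro k
      have hSm : MeasureTheory.volume S = 0 :=
        (Sset_countable c ι D).measure_zero _
      have : MeasureTheory.volume (Set.Ioo (0:ℝ) (1/(k+1)) \ S) =
          MeasureTheory.volume (Set.Ioo (0:ℝ) (1/(k+1))) :=
        MeasureTheory.measure_diff_null hSm
      have hpos : MeasureTheory.volume (Set.Ioo (0:ℝ) (1/(k+1))) ≠ 0 := by
        rw [Real.volume_Ioo]
        simp only [ne_eq, ENNReal.ofReal_eq_zero, not_le, sub_zero]
        positivity
      exact MeasureTheory.nonempty_of_measure_ne_zero (this ▸ hpos)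
    choose s hs using hex
    have hs_pos : ∀ k, 0 < s k := fun k => (hs k).1.1
    have hs_lt : ∀ k, s k < 1/(k+1) := fun k => (hs k).1.2
    have hs_nS : ∀ k, s k ∉ S := fun k => (hs k).2
    have hs0 : Tendsto s atTop (𝓝 0) := by
      refine squeeze_zero (fun k => (hs_pos k).le) (fun k => (hs_lt k).le) ?_
      exact_mod_cast tendsto_one_div_add_atTop_nhds_zero_nat (𝕜 := ℝ)
    have hs_ne : ∀ k, s k ≠ 0 := fun k => (hs_pos k).ne'
    have hs0' : Tendsto s atTop (𝓝[≠] (0:ℝ)) :=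
      tendsto_nhdsWithin_of_tendsto_nhds_of_eventually_within _ hs0
        (Eventually.of_forall fun k => hs_ne k)
    -- Q(h) = p(c+h)
    set Q : Polynomial ℝ := p.comp (Polynomial.X + Polynomial.C c) with hQdef
    have hQeval : ∀ h : ℝ, Q.eval h = p.eval (c + h) := by
      intro h
      simp [hQdef, add_comm]
    have hQdeg : Q.natDegree ≤ n := by
      rw [hQdef, Polynomial.natDegree_comp, Polynomial.natDegree_X_add_C, mul_one]
      exact Polynomial.natDegree_le_iff_degree_le.mpr hpdeg
    have hQ0 : Q = 0 := by
      apply poly_zero_of_tendsto n Q s hs_ne hs0 hQdeg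
      have h1 := (hpo.comp_tendsto hs0').tendsto_div_nhds_zero
      have h2 : ∀ k, ((fun h : ℝ => f (c + h) - p.eval (c + h)) ∘ s) k / (s k) ^ n =
          -(Q.eval (s k) / (s k) ^ n) := by
        intro k
        simp only [Function.comp_apply, hf, if_neg (hs_nS k), hQeval, zero_sub, neg_div]
      rw [show (fun k => Q.eval (s k) / (s k) ^ n) =
        fun k => -(((fun h : ℝ => f (c + h) - p.eval (c + h)) ∘ s) k / (s k) ^ n) by
          funext k; rw [h2 k, neg_neg]]
      simpa using h1.neg
    have hp0 : ∀ h : ℝ, p.eval (c + h) = 0 := by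
      intro h
      rw [← hQeval, hQ0, Polynomial.eval_zero]
    -- sequence in S
    set t : ℕ → ℝ := fun k => ((1:ℝ)/2) ^ (k+1) with htdef
    have ht_pos : ∀ k, 0 < t k := fun k => by positivity
    have ht_mem : ∀ k, t k ∈ S := fun k => half_pow_mem_Sset c ι D k
    have ht0 : Tendsto t atTop (𝓝 0) := by
      have := (tendsto_pow_atTop_nhds_zero_of_lt_one (by norm_num : (0:ℝ) ≤ 1/2)
        (by norm_num)).comp (tendsto_add_atTop_nat 1)
      exact this
    have ht0' : Tendsto t atTop (𝓝[≠] (0:ℝ)) :=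
      tendsto_nhdsWithin_of_tendsto_nhds_of_eventually_within _ ht0
        (Eventually.of_forall fun k => (ht_pos k).ne')
    have h1 := (hpo.comp_tendsto ht0').tendsto_div_nhds_zero
    have h2 : ∀ k, ((fun h : ℝ => f (c + h) - p.eval (c + h)) ∘ t) k / (t k) ^ n = 1 := by
      intro k
      simp only [Function.comp_apply, hf, if_pos (ht_mem k), hp0, sub_zero]
      exact div_self (pow_ne_zero _ (ht_pos k).ne')
    rw [show ((fun h : ℝ => f (c + h) - p.eval (c + h)) ∘ t) = fun k =>
      ((fun h : ℝ => f (c + h) - p.eval (c + h)) ∘ t) k from rfl] at h1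
    have : Tendsto (fun _ : ℕ => (1:ℝ)) atTop (𝓝 0) := by
      refine h1.congr fun k => ?_
      exact h2 k
    exact absurd (tendsto_nhds_unique this tendsto_const_nhds) zero_ne_one
end

section
/- An exact n-th generalized Riemann difference whose set of nodes is symmetric relative to the origin is a symmetric difference, i.e., satisfies D(−h) = (−1)^n D(h). -/
open Finset

/-- An exact `n`-th generalized Riemann difference whose node set is symmetric
relative to the origin is a symmetric difference: `D(-h) = (-1)ⁿ D(h)` as formal
differences. -/
theorem exact_symmetric_nodes_implies_symmetric_difference (n : ℕ)
    (a b : Fin (n + 1) → ℝ) (hb : Function.Injective b)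
    (hnodes : (fun x : ℝ => -x) '' Set.range b = Set.range b)
    (hvan : ∀ k < n, ∑ i, a i * b i ^ k = 0)
    (hexact : ∑ i, a i * b i ^ n = (n.factorial : ℝ)) :
    (Finset.univ.val.map fun i : Fin (n + 1) => (a i, -b i)) =
      (Finset.univ.val.map fun i : Fin (n + 1) => ((-1 : ℝ) ^ n * a i, b i)) := by
  -- construct the permutation σ with b (σ i) = -b i
  have hex : ∀ i, ∃ j, b j = -b i := by
    intro i
    have : -b i ∈ Set.range b := by
      rw [← hnodes]; exact ⟨b i, ⟨i, rfl⟩, rfl⟩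
    exact this
  choose σ hσ using hex
  have hσinj : Function.Injective σ := by
    intro i j hij
    apply hb
    have := (hσ i).symm.trans (hij ▸ hσ j)
    exact neg_injective this
  have hσbij : Function.Bijective σ := Finite.injective_iff_bijective.mp hσinj
  set e : Fin (n + 1) ≃ Fin (n + 1) := Equiv.ofBijective σ hσbij with he
  -- the coefficient identity via Vandermonde uniqueness
  have hcoef : ∀ i, (-1 : ℝ) ^ n * a (σ i) - a i = 0 := by
    have := Matrix.eq_zero_of_forall_pow_sum_mul_pow_eq_zero (R := ℝ)
      (f := b) (v := fun i => (-1 : ℝ) ^ n * a (σ i) - a i) hb ?_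
    · intro i; exact congrFun this i
    · intro k
      have hsum : ∀ m : ℕ, ∑ j, ((-1 : ℝ) ^ n * a (σ j)) * b j ^ m
          = (-1 : ℝ) ^ (n + m) * ∑ j, a j * b j ^ m := by
        intro m
        rw [Finset.mul_sum]
        rw [← Equiv.sum_comp e (fun j => (-1 : ℝ) ^ (n + m) * (a j * b j ^ m))]
        apply Finset.sum_congr rfl
        intro j _
        have hbj : b j = -b (σ j) := by rw [hσ j]; ring
        have : (e j : Fin (n+1)) = σ j := rfl
        rw [this, hbj]
        rw [neg_pow, pow_add]
        ring
      have hval : ∑ j, a j * b j ^ (k : ℕ) =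
          (if (k : ℕ) = n then (n.factorial : ℝ) else 0) := by
        rcases lt_or_eq_of_le (Nat.lt_succ_iff.mp k.isLt) with h | h
        · rw [if_neg (Nat.ne_of_lt h)]; exact hvan _ h
        · rw [if_pos h, h]; exact hexact
      simp only [sub_mul, Finset.sum_sub_distrib]
      rw [hsum, hval]
      rcases lt_or_eq_of_le (Nat.lt_succ_iff.mp k.isLt) with h | h
      · rw [if_neg (Nat.ne_of_lt h)]; ring
      · rw [if_pos h, h, ← two_mul, pow_mul]; norm_num
  have hcoef' : ∀ i, a i = (-1 : ℝ) ^ n * a (σ i) := by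
    intro i; have := hcoef i; linarith
  -- conclude via reindexing the multiset by e
  calc (Finset.univ.val.map fun i : Fin (n + 1) => (a i, -b i))
      = Finset.univ.val.map ((fun i : Fin (n + 1) => ((-1 : ℝ) ^ n * a i, b i)) ∘ e) := by
        apply Multiset.map_congr rfl
        intro i _
        simp only [Function.comp_apply]
        have : (e i : Fin (n+1)) = σ i := rfl
        rw [this, hσ i, ← hcoef' i]
    _ = Finset.univ.val.map fun i : Fin (n + 1) => ((-1 : ℝ) ^ n * a i, b i) := by
        rw [← Multiset.map_map]
        congr 1
        have h := congrArg Finset.val (Finset.map_univ_equiv e)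
        simp only [Finset.map_val, Equiv.coe_toEmbedding] at h
        exact h
end

section
/- Let k be a positive integer and define T(h) = T_k(2h) − 2^{2k−1} T_k(h), where T_k = (Δ_{2k−1,k−1} + Δ_{2k−1,k})/2 is the exact odd symmetric difference with nodes ±1,…,±k and order 2k−1. Then T is an odd difference of order at least 2k+1. -/
open Finset fwdDiff

private lemma fwdDiff_pow_real (p : ℕ) :
    fwdDiff (1:ℝ) (fun x : ℝ ↦ x ^ p) = fun x ↦ ∑ j ∈ range p, (p.choose j : ℝ) * x ^ j := by
  funext x
  have h := add_pow x 1 p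
  simp only [one_pow, mul_one] at h
  rw [fwdDiff, h, Finset.sum_range_succ, Nat.choose_self]
  simp only [Nat.cast_one, mul_one, add_sub_cancel_right]
  exact Finset.sum_congr rfl fun j _ => mul_comm _ _

private lemma fwdDiff_iter_pow_zero : ∀ p n, p < n → ∀ y : ℝ,
    (fwdDiff (1:ℝ))^[n] (fun x : ℝ ↦ x ^ p) y = 0 := by
  intro p
  induction p using Nat.strong_induction_on with
  | _ p IH =>
    intro n hn y
    obtain ⟨m, rfl⟩ : ∃ m, n = m + 1 := ⟨n - 1, by omega⟩
    rw [Function.iterate_succ_apply, fwdDiff_pow_real]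
    have hfun : (fun x : ℝ ↦ ∑ j ∈ range p, (p.choose j : ℝ) * x ^ j)
        = ∑ j ∈ range p, (fun x : ℝ ↦ (p.choose j : ℝ) * x ^ j) := by
      funext x; simp [Finset.sum_apply]
    rw [hfun, fwdDiff_iter_finset_sum, Finset.sum_apply]
    refine Finset.sum_eq_zero fun j hj => ?_
    have hj' := Finset.mem_range.mp hj
    have hsm : (fun x : ℝ ↦ (p.choose j : ℝ) * x ^ j)
        = (p.choose j : ℝ) • (fun x : ℝ ↦ x ^ j) := by
      funext x; simp
    rw [hsm, fwdDiff_iter_const_smul, Pi.smul_apply, IH j hj' m (by omega) y, smul_zero]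

private lemma alt_sum_zero (n p : ℕ) (hp : p < n) (c : ℝ) :
    ∑ i ∈ range (n + 1), (-1 : ℝ) ^ i * (n.choose i : ℝ) * (c - (i : ℝ)) ^ p = 0 := by
  have key : (fwdDiff (1:ℝ))^[n] (fun x : ℝ ↦ (c - x) ^ p) 0 = 0 := by
    have hfun : (fun x : ℝ ↦ (c - x) ^ p)
        = ∑ j ∈ range (p + 1),
            (fun x : ℝ ↦ ((-1 : ℝ) ^ j * c ^ (p - j) * (p.choose j : ℝ)) * x ^ j) := by
      funext x
      rw [Finset.sum_apply]
      have hcx : c - x = -x + c := by ring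
      rw [hcx, add_pow]
      refine Finset.sum_congr rfl fun j _ => ?_
      rw [neg_pow]
      ring
    rw [hfun, fwdDiff_iter_finset_sum, Finset.sum_apply]
    refine Finset.sum_eq_zero fun j hj => ?_
    have hj' : j < n := by have := Finset.mem_range.mp hj; omega
    have hsm : (fun x : ℝ ↦ ((-1 : ℝ) ^ j * c ^ (p - j) * (p.choose j : ℝ)) * x ^ j)
        = ((-1 : ℝ) ^ j * c ^ (p - j) * (p.choose j : ℝ)) • (fun x : ℝ ↦ x ^ j) := by
      funext x; simp
    rw [hsm, fwdDiff_iter_const_smul, Pi.smul_apply, fwdDiff_iter_pow_zero j n hj' 0, smul_zero]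
  have h2 := fwdDiff_iter_eq_sum_shift (1 : ℝ) (fun x : ℝ ↦ (c - x) ^ p) n 0
  rw [key] at h2
  simp only [zero_add, smul_eq_mul, nsmul_eq_mul, mul_one, zsmul_eq_mul, Int.cast_mul,
    Int.cast_pow, Int.cast_neg, Int.cast_one, Int.cast_natCast] at h2
  have hterm : ∀ i ∈ range (n + 1),
      (-1 : ℝ) ^ i * (n.choose i : ℝ) * (c - (i : ℝ)) ^ p
        = (-1 : ℝ) ^ n * ((-1 : ℝ) ^ (n - i) * (n.choose i : ℝ) * (c - (i : ℝ)) ^ p) := by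
    intro i hi
    have hi' : i ≤ n := by have := Finset.mem_range.mp hi; omega
    have hsign : (-1 : ℝ) ^ n * (-1 : ℝ) ^ (n - i) = (-1 : ℝ) ^ i := by
      have hadd : n - i + i = n := by omega
      have h1 : (-1 : ℝ) ^ n = (-1 : ℝ) ^ (n - i) * (-1 : ℝ) ^ i := by
        rw [← pow_add, hadd]
      have h2 : (-1 : ℝ) ^ (n - i) * (-1 : ℝ) ^ (n - i) = 1 := by
        rw [← pow_add]; exact Even.neg_one_pow ⟨n - i, rfl⟩
      calc (-1 : ℝ) ^ n * (-1 : ℝ) ^ (n - i)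
          = ((-1 : ℝ) ^ (n - i) * (-1 : ℝ) ^ (n - i)) * (-1 : ℝ) ^ i := by rw [h1]; ring
        _ = (-1 : ℝ) ^ i := by rw [h2, one_mul]
    rw [← hsign]; ring
  rw [Finset.sum_congr rfl hterm, ← Finset.mul_sum, ← h2, mul_zero]

/-- With `T(h) = T_k(2h) - 2^{2k-1} T_k(h)`, where
`T_k(h)(f) = (1/2) ∑_{i=0}^{2k-1} (-1)^i C(2k-1,i) [f((k-i)h) + f((k-1-i)h)]`, all
moment sums of `T` of order `p ≤ 2k` vanish; that is, `T` is an odd difference of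
order at least `2k+1`. -/
theorem T_difference_order (k : ℕ) (hk : 0 < k) :
    ∀ p ≤ 2 * k,
      ∑ i ∈ Finset.range (2 * k),
        (1 / 2 : ℝ) * (-1 : ℝ) ^ i * (Nat.choose (2 * k - 1) i : ℝ) *
          ((2 * ((k : ℝ) - i)) ^ p + (2 * ((k : ℝ) - 1 - i)) ^ p -
            2 ^ (2 * k - 1) * (((k : ℝ) - i) ^ p + ((k : ℝ) - 1 - i) ^ p)) = 0 := by
  intro p hp
  have step : ∀ i ∈ Finset.range (2 * k),
      (1 / 2 : ℝ) * (-1 : ℝ) ^ i * (Nat.choose (2 * k - 1) i : ℝ) *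
          ((2 * ((k : ℝ) - i)) ^ p + (2 * ((k : ℝ) - 1 - i)) ^ p -
            2 ^ (2 * k - 1) * (((k : ℝ) - i) ^ p + ((k : ℝ) - 1 - i) ^ p))
        = (1 / 2 : ℝ) * ((2 : ℝ) ^ p - 2 ^ (2 * k - 1)) *
          ((-1 : ℝ) ^ i * (Nat.choose (2 * k - 1) i : ℝ) *
            (((k : ℝ) - i) ^ p + ((k : ℝ) - 1 - i) ^ p)) := by
    intro i _
    rw [mul_pow, mul_pow]; ring
  rw [Finset.sum_congr rfl step, ← Finset.mul_sum]
  rcases eq_or_lt_of_le hp with hp2k | hlt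
  · -- p = 2k : antisymmetry
    set f : ℕ → ℝ := fun i => (-1 : ℝ) ^ i * (Nat.choose (2 * k - 1) i : ℝ) *
      (((k : ℝ) - i) ^ p + ((k : ℝ) - 1 - i) ^ p) with hf
    have hrefl := Finset.sum_range_reflect f (2 * k)
    have hneg : ∀ j ∈ Finset.range (2 * k), f (2 * k - 1 - j) = - f j := by
      intro j hj
      have hj' : j < 2 * k := Finset.mem_range.mp hj
      have hj1 : j ≤ 2 * k - 1 := by omega
      have hk1 : 1 ≤ 2 * k := by omega
      have hcast : ((2 * k - 1 - j : ℕ) : ℝ) = 2 * (k : ℝ) - 1 - (j : ℝ) := by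
        rw [Nat.cast_sub hj1, Nat.cast_sub hk1]; push_cast; ring
      have hev : Even p := by rw [hp2k]; exact even_two_mul k
      have hsign : (-1 : ℝ) ^ (2 * k - 1 - j) = -(-1 : ℝ) ^ j := by
        have h1 : (-1 : ℝ) ^ (2 * k - 1 - j) * (-1 : ℝ) ^ j = -1 := by
          rw [← pow_add]
          have : 2 * k - 1 - j + j = 2 * k - 1 := by omega
          rw [this]; exact Odd.neg_one_pow ⟨k - 1, by omega⟩
        have h2 : (-1 : ℝ) ^ j * (-1 : ℝ) ^ j = 1 := by
          rw [← pow_add]; exact Even.neg_one_pow ⟨j, rfl⟩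
        calc (-1 : ℝ) ^ (2 * k - 1 - j)
            = (-1 : ℝ) ^ (2 * k - 1 - j) * ((-1 : ℝ) ^ j * (-1 : ℝ) ^ j) := by rw [h2, mul_one]
          _ = ((-1 : ℝ) ^ (2 * k - 1 - j) * (-1 : ℝ) ^ j) * (-1 : ℝ) ^ j := by ring
          _ = -(-1 : ℝ) ^ j := by rw [h1]; ring
      simp only [hf, hcast, hsign, Nat.choose_symm hj1]
      have e1 : (k : ℝ) - (2 * (k : ℝ) - 1 - (j : ℝ)) = -((k : ℝ) - 1 - j) := by ring
      have e2 : (k : ℝ) - 1 - (2 * (k : ℝ) - 1 - (j : ℝ)) = -((k : ℝ) - j) := by ring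
      rw [e1, e2, hev.neg_pow, hev.neg_pow]
      ring
    have hS : ∑ j ∈ Finset.range (2 * k), f j = - ∑ j ∈ Finset.range (2 * k), f j := by
      conv_lhs => rw [← hrefl]
      rw [Finset.sum_congr rfl hneg, Finset.sum_neg_distrib]
    have : ∑ j ∈ Finset.range (2 * k), f j = 0 := by linarith
    rw [this, mul_zero]
  · have hple : p ≤ 2 * k - 1 := by omega
    rcases eq_or_lt_of_le hple with hpe | hplt
    · rw [hpe, sub_self, mul_zero, zero_mul]
    · have h2k1 : 2 * k - 1 + 1 = 2 * k := by omega
      have hA := alt_sum_zero (2 * k - 1) p hplt (k : ℝ)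
      have hB := alt_sum_zero (2 * k - 1) p hplt ((k : ℝ) - 1)
      rw [h2k1] at hA hB
      have hsum : ∑ i ∈ Finset.range (2 * k),
          (-1 : ℝ) ^ i * (Nat.choose (2 * k - 1) i : ℝ) *
            (((k : ℝ) - i) ^ p + ((k : ℝ) - 1 - i) ^ p) = 0 := by
        simp only [mul_add, Finset.sum_add_distrib]
        rw [hA, hB, add_zero]
      rw [hsum, mul_zero]
end

section
/- Let n ≥ 3 be odd, m = (n−1)/2, and suppose f : ℝ → ℝ satisfies f(h) = o(h^{n−1}) as h → 0. Suppose for each r with m+1 ≤ r ≤ 2m there is an even difference D_r (centered at 0) of order at least 2(m+1), with nodes ±r and remaining nodes in {0, ±1,…,±(r−1)}, such that lim_{h→0} D_r(h)(f)/h^n exists. Then lim_{h→0} [f(h) + f(−h)]/h^n exists. -/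
open Filter Topology Asymptotics Finset

lemma aux_neg_tendsto : Tendsto (fun h : ℝ => -h) (𝓝[≠] (0:ℝ)) (𝓝[≠] (0:ℝ)) := by
  apply tendsto_nhdsWithin_of_tendsto_nhds_of_eventually_within
  · have : Tendsto (fun h : ℝ => -h) (𝓝 (0:ℝ)) (𝓝 (-(0:ℝ))) := (continuous_neg).tendsto 0
    simpa using this.mono_left nhdsWithin_le_nhds
  · exact eventually_nhdsWithin_of_forall (fun x hx => by
      simp only [Set.mem_compl_iff, Set.mem_singleton_iff] at *
      exact neg_ne_zero.mpr hx)

lemma aux_mul_tendsto (c : ℝ) (hc : c ≠ 0) :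
    Tendsto (fun h : ℝ => c * h) (𝓝[≠] (0:ℝ)) (𝓝[≠] (0:ℝ)) := by
  apply tendsto_nhdsWithin_of_tendsto_nhds_of_eventually_within
  · have : Tendsto (fun h : ℝ => c * h) (𝓝 (0:ℝ)) (𝓝 (c * 0)) :=
      (continuous_const.mul continuous_id).tendsto 0
    simpa using this.mono_left nhdsWithin_le_nhds
  · exact eventually_nhdsWithin_of_forall (fun x hx => by
      simp only [Set.mem_compl_iff, Set.mem_singleton_iff] at *
      exact mul_ne_zero hc hx)

lemma sum_Icc_one {α : Type*} [AddCommMonoid α] (m : ℕ) (f : ℕ → α) :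
    ∑ v ∈ Icc 1 m, f v = ∑ i : Fin m, f ((i : ℕ) + 1) := by
  rw [Fin.sum_univ_eq_sum_range (fun i => f (i + 1)) m]
  refine Finset.sum_nbij' (fun v => v - 1) (fun i => i + 1) ?_ ?_ ?_ ?_ ?_ <;>
    intro x hx <;> simp only [mem_Icc, mem_range] at * <;> try omega
  congr 1; omega

lemma sum_Icc_zero_split {α : Type*} [AddCommMonoid α] (N : ℕ) (f : ℕ → α) :
    ∑ v ∈ Icc 0 N, f v = f 0 + ∑ v ∈ Icc 1 N, f v := by
  have h0 : (0:ℕ) ∈ Icc 0 N := by simp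
  have herase : (Icc 0 N).erase 0 = Icc 1 N := by
    ext x; simp only [mem_erase, mem_Icc]; omega
  rw [← Finset.add_sum_erase _ _ h0, herase]

-- Matrix section
noncomputable def Bmat (m : ℕ) : Matrix (Fin m) (Fin m) ℝ :=
  fun j v => (((v : ℕ) + 1 : ℕ) : ℝ) ^ (2 * ((j : ℕ) + 1))

lemma Bmat_det_ne_zero (m : ℕ) : (Bmat m).det ≠ 0 := by
  classical
  set w : Fin m → ℝ := fun v => (((v : ℕ) + 1 : ℕ) : ℝ) ^ 2 with hw
  have hBmat : Bmat m = (Matrix.diagonal w * Matrix.vandermonde w).transpose := by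
    ext j v
    simp only [Bmat, Matrix.transpose_apply, Matrix.mul_apply, Matrix.diagonal,
      Matrix.vandermonde, Matrix.of_apply]
    rw [Finset.sum_eq_single v (fun b _ hb => by simp [Ne.symm hb]) (fun h => by simp at h)]
    simp only [if_pos rfl]
    rw [hw]
    simp only [if_true]
    ring
  rw [hBmat, Matrix.det_transpose, Matrix.det_mul,
    Matrix.det_vandermonde, Matrix.det_diagonal]
  apply mul_ne_zero
  · apply Finset.prod_ne_zero_iff.mpr
    intro v _
    rw [hw]; positivity
  · apply Finset.prod_ne_zero_iff.mpr
    intro i _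
    apply Finset.prod_ne_zero_iff.mpr
    intro j hj
    have hij : (i : ℕ) < (j : ℕ) := by
      have := Finset.mem_Ioi.mp hj
      exact Fin.lt_def.mp this
    have : w i < w j := by
      rw [hw]
      have hc : (((i : ℕ) + 1 : ℕ) : ℝ) < (((j : ℕ) + 1 : ℕ) : ℝ) := by exact_mod_cast Nat.succ_lt_succ hij
      exact pow_lt_pow_left₀ hc (by positivity) (by norm_num)
    exact sub_ne_zero.mpr (ne_of_gt this)



noncomputable def gN (m j v : ℕ) : ℝ :=
  if h : 1 ≤ j ∧ j ≤ m ∧ 1 ≤ v ∧ v ≤ m then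
    (Bmat m)⁻¹ ⟨v - 1, by omega⟩ ⟨j - 1, by omega⟩ else 0

lemma gN_eq_zero {m j v : ℕ} (h : ¬(1 ≤ j ∧ j ≤ m ∧ 1 ≤ v ∧ v ≤ m)) : gN m j v = 0 := by
  simp only [gN, dif_neg h]

lemma gN_colsum (m v : ℕ) (hv : 1 ≤ v) (hv2 : v ≤ m) :
    ∑ j ∈ Icc 1 m, gN m j v = if v = 1 then 1 else 0 := by
  have hunit : IsUnit (Bmat m).det := isUnit_iff_ne_zero.mpr (Bmat_det_ne_zero m)
  have h0 : (0:ℕ) < m := by omega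
  have hvm : v - 1 < m := by omega
  rw [sum_Icc_one]
  have step1 : ∑ i : Fin m, gN m ((i : ℕ) + 1) v
      = ∑ i : Fin m, (Bmat m)⁻¹ ⟨v - 1, hvm⟩ i * Bmat m i ⟨0, h0⟩ := by
    apply Finset.sum_congr rfl
    intro i _
    have hcond : 1 ≤ (i:ℕ) + 1 ∧ (i:ℕ) + 1 ≤ m ∧ 1 ≤ v ∧ v ≤ m := ⟨by omega, by omega, hv, hv2⟩
    rw [gN, dif_pos hcond]
    have hB : Bmat m i ⟨0, h0⟩ = 1 := by simp [Bmat]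
    rw [hB, mul_one]
    apply congrArg
    exact Fin.ext (by simp)
  rw [step1, ← Matrix.mul_apply, Matrix.nonsing_inv_mul _ hunit, Matrix.one_apply]
  congr 1
  simp only [Fin.mk.injEq, eq_iff_iff]
  omega

lemma gN_moment (m j j' : ℕ) (hj : 1 ≤ j) (hj2 : j ≤ m) (hj' : 1 ≤ j') (hj'2 : j' ≤ m) :
    ∑ v ∈ Icc 1 m, gN m j v * (v : ℝ) ^ (2 * j') = if j' = j then 1 else 0 := by
  have hunit : IsUnit (Bmat m).det := isUnit_iff_ne_zero.mpr (Bmat_det_ne_zero m)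
  have hjm : j - 1 < m := by omega
  have hj'm : j' - 1 < m := by omega
  rw [sum_Icc_one]
  have step1 : ∑ i : Fin m, gN m j ((i : ℕ) + 1) * (((i : ℕ) + 1 : ℕ) : ℝ) ^ (2 * j')
      = ∑ i : Fin m, Bmat m ⟨j' - 1, hj'm⟩ i * (Bmat m)⁻¹ i ⟨j - 1, hjm⟩ := by
    apply Finset.sum_congr rfl
    intro i _
    have hcond : 1 ≤ j ∧ j ≤ m ∧ 1 ≤ (i : ℕ) + 1 ∧ (i : ℕ) + 1 ≤ m :=
      ⟨hj, hj2, by omega, by omega⟩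
    rw [gN, dif_pos hcond, mul_comm]
    congr 1
    simp only [Bmat]
    congr 1
    omega
  rw [step1, ← Matrix.mul_apply, Matrix.mul_nonsing_inv _ hunit, Matrix.one_apply]
  congr 1
  simp only [Fin.mk.injEq, eq_iff_iff]
  omega

lemma core_lemma (n m j : ℕ) (hm : n = 2*m+1) (hj1 : 1 ≤ j) (hj2 : j ≤ m)
    (φ : ℝ → ℝ) (g : ℕ → ℝ) (F : ℝ → ℝ)
    (hF : ∀ h : ℝ, F h = ∑ v ∈ Icc 1 m, g v * φ ((v:ℝ) * h))
    (hφ : (fun h : ℝ => φ h) =o[𝓝[≠] (0:ℝ)] fun h => h ^ (n-1))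
    (hA : (fun h : ℝ => F (2*h) - 4^j * F h) =o[𝓝[≠] (0:ℝ)] fun h => h ^ n) :
    (fun h : ℝ => F h) =o[𝓝[≠] (0:ℝ)] fun h => h ^ n := by
  have hn1 : 1 ≤ n := by omega
  have h2jn : 2*j ≤ n - 1 := by omega
  have hq1 : (4:ℝ)^j ≤ 2^(n-1) := by
    calc (4:ℝ)^j = 2^(2*j) := by rw [pow_mul]; norm_num
    _ ≤ 2^(n-1) := pow_le_pow_right₀ one_le_two h2jn
  rw [isLittleO_iff]
  intro ε hε
  have hAev : ∀ᶠ t in 𝓝[≠] (0:ℝ), ‖F (2*t) - 4^j * F t‖ ≤ ε * ‖t ^ n‖ := hA.def hε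
  rw [Filter.eventually_iff, Metric.mem_nhdsWithin_iff] at hAev
  obtain ⟨η, hη, hsub⟩ := hAev
  rw [Filter.eventually_iff, Metric.mem_nhdsWithin_iff]
  refine ⟨η, hη, ?_⟩
  rintro h ⟨hball, hne⟩
  simp only [Metric.mem_ball, Real.dist_eq, sub_zero] at hball
  simp only [Set.mem_compl_iff, Set.mem_singleton_iff] at hne
  simp only [Set.mem_setOf_eq]
  set q : ℝ := (4:ℝ)^j with hqdef
  have hq0 : (0:ℝ) < q := by positivity
  set u : ℕ → ℝ := fun k => q^k * F (h / 2^k) with hudef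
  have hAt : ∀ k : ℕ, u k - u (k+1) = q^k * (F (2*(h/2^(k+1))) - q * F (h/2^(k+1))) := by
    intro k
    have h2 : 2*(h/2^(k+1)) = h/2^k := by
      rw [pow_succ]; field_simp
    rw [h2, hudef]
    simp only [pow_succ]
    ring
  have hunroll : ∀ K : ℕ, F h - u K = ∑ k ∈ range K, q^k * (F (2*(h/2^(k+1))) - q * F (h/2^(k+1))) := by
    intro K
    have hsum := Finset.sum_range_sub' (fun k => q^k * F (h / 2^k)) K
    calc F h - u K = (fun k => q^k * F (h / 2^k)) 0 - (fun k => q^k * F (h / 2^k)) K := by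
          simp [hudef]
      _ = ∑ k ∈ range K, ((fun k => q^k * F (h / 2^k)) k - (fun k => q^k * F (h / 2^k)) (k+1)) := hsum.symm
      _ = ∑ k ∈ range K, q^k * (F (2*(h/2^(k+1))) - q * F (h/2^(k+1))) :=
          Finset.sum_congr rfl (fun k _ => hAt k)
  have hterm : ∀ k : ℕ, ‖q^k * (F (2*(h/2^(k+1))) - q * F (h/2^(k+1)))‖
      ≤ ε * |h|^n * ((1/2)^k * (1/2)) := by
    intro k
    have htne : h / 2^(k+1) ≠ 0 := div_ne_zero hne (by positivity)
    have htball : |h / 2^(k+1)| < η := by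
      rw [abs_div, abs_pow, abs_two]
      calc |h| / (2:ℝ)^(k+1) ≤ |h| := div_le_self (abs_nonneg h) (one_le_pow₀ one_le_two)
        _ < η := hball
    have hmem : h / 2^(k+1) ∈ {t : ℝ | ‖F (2*t) - 4^j * F t‖ ≤ ε * ‖t ^ n‖} := by
      apply hsub
      constructor
      · simp only [Metric.mem_ball, Real.dist_eq, sub_zero]
        exact htball
      · simpa using htne
    simp only [Set.mem_setOf_eq, ← hqdef] at hmem
    have hfrac : q^k / 2^((k+1)*n) ≤ ((1:ℝ)/2)^k * (1/2) := by
      have hexp : 2*j*k + (k+1) ≤ (k+1)*n := by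
        have hjk : 2*j*k ≤ 2*m*k := Nat.mul_le_mul_right _ (by omega)
        nlinarith
      have hqk : q^k * 2^(k+1) ≤ (2:ℝ)^((k+1)*n) := by
        calc q^k * 2^(k+1) = (2:ℝ)^(2*j*k) * 2^(k+1) := by
              rw [hqdef, ← pow_mul]; norm_num [pow_mul]
          _ = (2:ℝ)^(2*j*k + (k+1)) := (pow_add 2 _ _).symm
          _ ≤ (2:ℝ)^((k+1)*n) := pow_le_pow_right₀ one_le_two hexp
      rw [div_le_iff₀ (by positivity)]
      calc q^k = q^k * 2^(k+1) / 2^(k+1) := by field_simp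
        _ ≤ (2:ℝ)^((k+1)*n) / 2^(k+1) := by
            apply div_le_div_of_nonneg_right hqk (by positivity) |>.trans_eq rfl
        _ = ((1:ℝ)/2)^k * (1/2) * 2^((k+1)*n) := by
            rw [div_eq_mul_inv, mul_comm]
            congr 1
            rw [← pow_succ ((1:ℝ)/2) k]
            rw [one_div, inv_pow]
    calc ‖q^k * (F (2*(h/2^(k+1))) - q * F (h/2^(k+1)))‖
        = q^k * ‖F (2*(h/2^(k+1))) - q * F (h/2^(k+1))‖ := by
          rw [norm_mul, norm_pow, Real.norm_eq_abs, abs_of_pos hq0]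
      _ ≤ q^k * (ε * ‖(h/2^(k+1)) ^ n‖) := mul_le_mul_of_nonneg_left hmem (by positivity)
      _ = ε * |h|^n * (q^k / 2^((k+1)*n)) := by
          rw [norm_pow, Real.norm_eq_abs, abs_div, abs_pow, abs_two, div_pow, ← pow_mul]
          field_simp
          ring
      _ ≤ ε * |h|^n * (((1:ℝ)/2)^k * (1/2)) := by
          apply mul_le_mul_of_nonneg_left hfrac (by positivity)
  have hsumbound : ∀ K : ℕ, ‖F h - u K‖ ≤ ε * |h|^n := by
    intro K
    rw [hunroll K]
    calc ‖∑ k ∈ range K, q^k * (F (2*(h/2^(k+1))) - q * F (h/2^(k+1)))‖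
        ≤ ∑ k ∈ range K, ‖q^k * (F (2*(h/2^(k+1))) - q * F (h/2^(k+1)))‖ := norm_sum_le _ _
      _ ≤ ∑ k ∈ range K, ε * |h|^n * ((1/2)^k * (1/2)) :=
          Finset.sum_le_sum (fun k _ => hterm k)
      _ = ε * |h|^n * (1/2) * ∑ k ∈ range K, ((1:ℝ)/2)^k := by
          rw [Finset.mul_sum]
          apply Finset.sum_congr rfl
          intro k _
          ring
      _ ≤ ε * |h|^n * (1/2) * 2 := by
          apply mul_le_mul_of_nonneg_left (sum_geometric_two_le K) (by positivity)
      _ = ε * |h|^n := by ring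
  -- u K tends to 0
  have hu0 : Tendsto u atTop (𝓝 0) := by
    have hu' : ∀ K, u K = ∑ v ∈ Icc 1 m, g v * (q^K * φ ((v:ℝ) * (h / 2^K))) := by
      intro K
      rw [hudef]
      simp only [hF (h / 2^K), Finset.mul_sum]
      apply Finset.sum_congr rfl
      intro v _
      ring
    have : Tendsto (fun K => ∑ v ∈ Icc 1 m, g v * (q^K * φ ((v:ℝ) * (h / 2^K)))) atTop (𝓝 0) := by
      have hzero : (0:ℝ) = ∑ v ∈ Icc 1 m, (0:ℝ) := by simp
      rw [hzero]
      apply tendsto_finset_sum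
      intro v hv
      have hv1 : 1 ≤ v := (Finset.mem_Icc.mp hv).1
      have hvne : ((v:ℝ)) ≠ 0 := by positivity
      have hcv : (v:ℝ) * h ≠ 0 := mul_ne_zero hvne hne
      set t' : ℕ → ℝ := fun K => (v:ℝ) * (h / 2^K) with ht'def
      have ht'eq : ∀ K, t' K = ((v:ℝ)*h) * (1/2)^K := by
        intro K
        rw [ht'def]
        show (v:ℝ) * (h / 2^K) = (v:ℝ)*h*(1/2)^K
        rw [one_div, inv_pow, div_eq_mul_inv, mul_assoc]
      have ht'0 : Tendsto t' atTop (𝓝[≠] (0:ℝ)) := by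
        apply tendsto_nhdsWithin_of_tendsto_nhds_of_eventually_within
        · have hb : Tendsto (fun K : ℕ => ((v:ℝ)*h) * (1/2)^K) atTop (𝓝 (((v:ℝ)*h) * 0)) :=
            (tendsto_pow_atTop_nhds_zero_of_lt_one (by norm_num) (by norm_num)).const_mul _
          simp only [mul_zero] at hb
          apply Tendsto.congr (fun K => (ht'eq K).symm) hb
        · apply Filter.Eventually.of_forall
          intro K
          have : t' K ≠ 0 := by
            rw [ht'eq]
            positivity
          simpa using this
      have hR : Tendsto (fun K => φ (t' K) / (t' K)^(n-1)) atTop (𝓝 0) :=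
        (hφ.tendsto_div_nhds_zero).comp ht'0
      have hsq : ∀ K, ‖q^K * φ (t' K)‖ ≤ |(v:ℝ)*h|^(n-1) * ‖φ (t' K) / (t' K)^(n-1)‖ := by
        intro K
        have ht'ne : t' K ≠ 0 := by rw [ht'eq]; positivity
        have hphi : φ (t' K) = (φ (t' K) / (t' K)^(n-1)) * (t' K)^(n-1) := by
          field_simp
        rw [norm_mul, Real.norm_eq_abs, Real.norm_eq_abs]
        calc |q^K| * |φ (t' K)| = |q^K| * (|φ (t' K) / (t' K)^(n-1)| * |(t' K)^(n-1)|) := by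
              conv_lhs => rw [hphi]
              rw [abs_mul (φ (t' K) / (t' K)^(n-1)) ((t' K)^(n-1))]
          _ = |φ (t' K) / (t' K)^(n-1)| * (|q^K| * |(t' K)^(n-1)|) := by ring
          _ ≤ |φ (t' K) / (t' K)^(n-1)| * |(v:ℝ)*h|^(n-1) := by
              apply mul_le_mul_of_nonneg_left _ (abs_nonneg _)
              rw [abs_pow, abs_of_pos hq0, abs_pow]
              rw [ht'eq, abs_mul, mul_pow, abs_pow, abs_div, abs_one, abs_two]
              calc q^K * (|(v:ℝ)*h|^(n-1) * ((1/2)^K)^(n-1))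
                  = |(v:ℝ)*h|^(n-1) * (q^K * ((1/2)^(n-1))^K) := by
                    rw [← pow_mul, ← pow_mul, mul_comm K (n-1)]
                    ring
                _ ≤ |(v:ℝ)*h|^(n-1) * 1 := by
                    apply mul_le_mul_of_nonneg_left _ (by positivity)
                    have : q * (1/2)^(n-1) ≤ 1 := by
                      rw [hqdef]
                      rw [one_div, inv_pow, ← div_eq_mul_inv]
                      rw [div_le_one (by positivity)]
                      exact hq1
                    calc q^K * ((1/2)^(n-1))^K = (q * (1/2)^(n-1))^K := (mul_pow _ _ K).symm
                    _ ≤ 1^K := pow_le_pow_left₀ (by positivity) this K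
                    _ = 1 := one_pow K
                _ = |(v:ℝ)*h|^(n-1) := mul_one _
          _ = |(v:ℝ)*h|^(n-1) * |φ (t' K) / (t' K)^(n-1)| := by ring
      have : Tendsto (fun K => q^K * φ (t' K)) atTop (𝓝 0) := by
        apply squeeze_zero_norm hsq
        have := hR.norm
        simp only [norm_zero] at this
        have h2 : Tendsto (fun K => |(v:ℝ)*h|^(n-1) * ‖φ (t' K) / (t' K)^(n-1)‖) atTop
            (𝓝 (|(v:ℝ)*h|^(n-1) * 0)) := this.const_mul _
        simpa using h2
      simpa using this.const_mul (g v)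
    exact this.congr (fun K => (hu' K).symm)
  -- conclude
  have hle : ∀ K : ℕ, ‖F h‖ ≤ ‖u K‖ + ε * |h|^n := by
    intro K
    calc ‖F h‖ = ‖u K + (F h - u K)‖ := by rw [add_sub_cancel]
      _ ≤ ‖u K‖ + ‖F h - u K‖ := norm_add_le _ _
      _ ≤ ‖u K‖ + ε * |h|^n := by linarith [hsumbound K]
  have hulim : Tendsto (fun K => ‖u K‖ + ε * |h|^n) atTop (𝓝 (0 + ε * |h|^n)) := by
    apply Tendsto.add_const
    have := hu0.norm
    simpa using this
  have hfinal : ‖F h‖ ≤ 0 + ε * |h|^n :=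
    ge_of_tendsto hulim (Filter.Eventually.of_forall hle)
  simp only [Real.norm_eq_abs] at hfinal ⊢
  rw [abs_pow]
  linarith



lemma span_lemma (n m : ℕ) (hm1 : 1 ≤ m) (φ : ℝ → ℝ)
    (c : ℕ → ℕ → ℝ)
    (hmom : ∀ r, m+1 ≤ r → r ≤ 2*m → ∀ j', 1 ≤ j' → j' ≤ m →
        ∑ v ∈ Icc 1 (2*m), c r v * (v:ℝ)^(2*j') = 0)
    (hsupp : ∀ r, m+1 ≤ r → r ≤ 2*m → ∀ v, r < v → c r v = 0)
    (htop : ∀ r, m+1 ≤ r → r ≤ 2*m → c r r ≠ 0)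
    (happ : ∀ r, m+1 ≤ r → r ≤ 2*m →
        (fun h : ℝ => ∑ v ∈ Icc 1 (2*m), c r v * φ ((v:ℝ)*h)) =o[𝓝[≠] (0:ℝ)] fun h => h^n) :
    ∀ w : ℕ → ℝ, (∀ j', 1 ≤ j' → j' ≤ m → ∑ v ∈ Icc 1 (2*m), w v * (v:ℝ)^(2*j') = 0) →
      (fun h : ℝ => ∑ v ∈ Icc 1 (2*m), w v * φ ((v:ℝ)*h)) =o[𝓝[≠] (0:ℝ)] fun h => h^n := by
  classical
  have claim : ∀ r, m ≤ r → r ≤ 2*m →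
      ∀ w : ℕ → ℝ, (∀ j', 1 ≤ j' → j' ≤ m → ∑ v ∈ Icc 1 (2*m), w v * (v:ℝ)^(2*j') = 0) →
      (∀ v, r < v → w v = 0) →
      (fun h : ℝ => ∑ v ∈ Icc 1 (2*m), w v * φ ((v:ℝ)*h)) =o[𝓝[≠] (0:ℝ)] fun h => h^n := by
    intro r hr
    induction r, hr using Nat.le_induction with
    | base =>
      intro _ w hwmom hwsupp
      -- w vanishes identically on [1, 2m]
      have hwzero : ∀ v, 1 ≤ v → v ≤ 2*m → w v = 0 := by
        have hunit : IsUnit (Bmat m).det := isUnit_iff_ne_zero.mpr (Bmat_det_ne_zero m)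
        set vv : Fin m → ℝ := fun i => w ((i : ℕ) + 1) with hvvdef
        have hmv : (Bmat m).mulVec vv = 0 := by
          funext jf
          rw [Matrix.mulVec]
          show ∑ i, Bmat m jf i * vv i = 0
          have e1 : ∑ i : Fin m, Bmat m jf i * vv i
              = ∑ v ∈ Icc 1 m, w v * (v:ℝ)^(2*((jf:ℕ)+1)) := by
            rw [sum_Icc_one m (fun v => w v * (v:ℝ)^(2*((jf:ℕ)+1)))]
            apply Finset.sum_congr rfl
            intro i _
            rw [Bmat, mul_comm]
          have e2 : ∑ v ∈ Icc 1 m, w v * (v:ℝ)^(2*((jf:ℕ)+1))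
              = ∑ v ∈ Icc 1 (2*m), w v * (v:ℝ)^(2*((jf:ℕ)+1)) := by
            apply Finset.sum_subset (Finset.Icc_subset_Icc le_rfl (by omega))
            intro v hv hvn
            simp only [mem_Icc] at hv hvn
            rw [hwsupp v (by omega)]
            try ring
          rw [e1, e2, hwmom ((jf:ℕ)+1) (by omega) (by omega)]
          try rfl
        have hvv0 : vv = 0 := by
          have h1 : ((Bmat m)⁻¹ * Bmat m).mulVec vv = vv := by
            rw [Matrix.nonsing_inv_mul _ hunit, Matrix.one_mulVec]
          rw [← h1, ← Matrix.mulVec_mulVec, hmv, Matrix.mulVec_zero]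
        intro v hv1 hv2
        by_cases hvm : v ≤ m
        · have := congrFun hvv0 ⟨v - 1, by omega⟩
          simp only [hvvdef, Pi.zero_apply] at this
          have hveq : (v - 1) + 1 = v := by omega
          rwa [hveq] at this
        · exact hwsupp v (by omega)
      have hz : (fun h : ℝ => ∑ v ∈ Icc 1 (2*m), w v * φ ((v:ℝ)*h)) = fun _ => (0:ℝ) := by
        funext h
        apply Finset.sum_eq_zero
        intro v hv
        simp only [mem_Icc] at hv
        rw [hwzero v hv.1 hv.2]
        ring
      rw [hz]
      exact isLittleO_zero _ _
    | succ r hr ih =>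
      intro hr2 w hwmom hwsupp
      have hr2m : r ≤ 2*m := by omega
      have hrange1 : m+1 ≤ r+1 := by omega
      set lam : ℝ := w (r+1) / c (r+1) (r+1) with hlam
      set w' : ℕ → ℝ := fun v => w v - lam * c (r+1) v with hw'def
      have hw'mom : ∀ j', 1 ≤ j' → j' ≤ m →
          ∑ v ∈ Icc 1 (2*m), w' v * (v:ℝ)^(2*j') = 0 := by
        intro j' h1 h2
        have : ∑ v ∈ Icc 1 (2*m), w' v * (v:ℝ)^(2*j')
            = ∑ v ∈ Icc 1 (2*m), w v * (v:ℝ)^(2*j')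
              - lam * ∑ v ∈ Icc 1 (2*m), c (r+1) v * (v:ℝ)^(2*j') := by
          rw [Finset.mul_sum, ← Finset.sum_sub_distrib]
          apply Finset.sum_congr rfl
          intro v _
          rw [hw'def]
          ring
        rw [this, hwmom j' h1 h2, hmom (r+1) hrange1 hr2 j' h1 h2]
        ring
      have hw'supp : ∀ v, r < v → w' v = 0 := by
        intro v hv
        rw [hw'def]
        simp only []
        rcases Nat.lt_or_ge v (r+2) with hv2 | hv2
        · have hveq : v = r+1 := by omega
          have hcc := htop (r+1) hrange1 hr2
          rw [hveq, hlam]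
          field_simp
          ring
        · rw [hwsupp v (by omega), hsupp (r+1) hrange1 hr2 v (by omega)]
          ring
      have hIH := ih hr2m w' hw'mom hw'supp
      have hC := happ (r+1) hrange1 hr2
      have hsum : ∀ h : ℝ, ∑ v ∈ Icc 1 (2*m), w v * φ ((v:ℝ)*h)
          = (∑ v ∈ Icc 1 (2*m), w' v * φ ((v:ℝ)*h))
            + lam * ∑ v ∈ Icc 1 (2*m), c (r+1) v * φ ((v:ℝ)*h) := by
        intro h
        rw [Finset.mul_sum, ← Finset.sum_add_distrib]
        apply Finset.sum_congr rfl
        intro v _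
        rw [hw'def]
        ring
      have : (fun h : ℝ => (∑ v ∈ Icc 1 (2*m), w' v * φ ((v:ℝ)*h))
            + lam * ∑ v ∈ Icc 1 (2*m), c (r+1) v * φ ((v:ℝ)*h))
          =o[𝓝[≠] (0:ℝ)] fun h => h^n := hIH.add (hC.const_mul_left lam)
      exact this.congr' (Filter.Eventually.of_forall (fun h => (hsum h).symm))
        (Filter.EventuallyEq.refl _ _)
  intro w hwmom
  set w' : ℕ → ℝ := fun v => if v ≤ 2*m then w v else 0 with hw'def
  have hagree : ∀ v ∈ Icc 1 (2*m), w' v = w v := by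
    intro v hv
    simp only [mem_Icc] at hv
    rw [hw'def]
    simp [hv.2]
  have hw'mom : ∀ j', 1 ≤ j' → j' ≤ m → ∑ v ∈ Icc 1 (2*m), w' v * (v:ℝ)^(2*j') = 0 := by
    intro j' h1 h2
    rw [Finset.sum_congr rfl (fun v hv => by rw [hagree v hv])]
    exact hwmom j' h1 h2
  have := claim (2*m) (by omega) le_rfl w' hw'mom (fun v hv => by rw [hw'def]; simp; omega)
  apply this.congr' _ (Filter.EventuallyEq.refl _ _)
  apply Filter.Eventually.of_forall
  intro h
  exact Finset.sum_congr rfl (fun v hv => by rw [hagree v hv])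

lemma key_lemma (n m : ℕ) (hm : n = 2*m+1) (hm1 : 1 ≤ m) (φ : ℝ → ℝ)
    (hφ : (fun h : ℝ => φ h) =o[𝓝[≠] (0:ℝ)] fun h => h ^ (n-1))
    (hrel : ∀ v : ℕ → ℝ,
      (∀ j', 1 ≤ j' → j' ≤ m → ∑ c ∈ Icc 1 (2*m), v c * (c:ℝ)^(2*j') = 0) →
      ((fun h : ℝ => ∑ c ∈ Icc 1 (2*m), v c * φ ((c:ℝ)*h)) =o[𝓝[≠] (0:ℝ)] fun h => h^n)) :
    (fun h : ℝ => φ h) =o[𝓝[≠] (0:ℝ)] fun h => h ^ n := by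
  classical
  -- the functions F j
  set F : ℕ → ℝ → ℝ := fun j h => ∑ v ∈ Icc 1 m, gN m j v * φ ((v:ℝ) * h) with hFdef
  have hsub1 : Icc 1 m ⊆ Icc 1 (2*m) := Finset.Icc_subset_Icc le_rfl (by omega)
  -- the dyadic doubling relation vectors
  have hdyadic : ∀ j, 1 ≤ j → j ≤ m →
      (fun h : ℝ => F j (2*h) - 4^j * F j h) =o[𝓝[≠] (0:ℝ)] fun h => h^n := by
    intro j hj1 hj2
    set d : ℕ → ℝ := fun c => (if 2 ∣ c then gN m j (c/2) else 0) - 4^j * gN m j c with hddef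
    -- the two split sums
    have hsplit : ∀ G : ℕ → ℝ, ∑ c ∈ Icc 1 (2*m), d c * G c =
        (∑ v ∈ Icc 1 m, gN m j v * G (2*v)) - 4^j * ∑ v ∈ Icc 1 m, gN m j v * G v := by
      intro G
      have h1 : ∑ c ∈ Icc 1 (2*m), (if 2 ∣ c then gN m j (c/2) else 0) * G c
          = ∑ v ∈ Icc 1 m, gN m j v * G (2*v) := by
        have step : ∑ c ∈ Icc 1 (2*m), (if 2 ∣ c then gN m j (c/2) else 0) * G c
            = ∑ c ∈ Icc 1 (2*m), (if 2 ∣ c then gN m j (c/2) * G c else 0) := by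
          apply Finset.sum_congr rfl
          intro c _
          split_ifs <;> simp
        rw [step, ← Finset.sum_filter]
        refine Finset.sum_nbij' (fun c => c / 2) (fun v => 2 * v) ?_ ?_ ?_ ?_ ?_
        · intro c hc
          simp only [Finset.mem_filter, mem_Icc] at hc
          simp only [mem_Icc]
          omega
        · intro v hv
          simp only [mem_Icc] at hv
          simp only [Finset.mem_filter, mem_Icc]
          omega
        · intro c hc
          simp only [Finset.mem_filter, mem_Icc] at hc
          show 2 * (c / 2) = c
          omega
        · intro v _
          show 2 * v / 2 = v
          omega
        · intro c hc
          simp only [Finset.mem_filter, mem_Icc] at hc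
          have hc2 : 2 * (c / 2) = c := by omega
          show gN m j (c / 2) * G c = gN m j (c / 2) * G (2 * (c / 2))
          rw [hc2]
      have h2 : ∑ c ∈ Icc 1 (2*m), (4:ℝ)^j * gN m j c * G c
          = 4^j * ∑ v ∈ Icc 1 m, gN m j v * G v := by
        rw [Finset.mul_sum]
        rw [← Finset.sum_subset hsub1 (fun c _ hc => ?_)]
        · exact Finset.sum_congr rfl (fun c _ => by ring)
        · have : gN m j c = 0 := gN_eq_zero (by
            simp only [mem_Icc] at hc
            tauto)
          rw [this]
          ring
      calc ∑ c ∈ Icc 1 (2*m), d c * G c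
          = ∑ c ∈ Icc 1 (2*m), ((if 2 ∣ c then gN m j (c/2) else 0) * G c - 4^j * gN m j c * G c) := by
            apply Finset.sum_congr rfl
            intro c _
            rw [hddef]
            ring
        _ = (∑ c ∈ Icc 1 (2*m), (if 2 ∣ c then gN m j (c/2) else 0) * G c)
            - ∑ c ∈ Icc 1 (2*m), (4:ℝ)^j * gN m j c * G c := Finset.sum_sub_distrib _ _
        _ = (∑ v ∈ Icc 1 m, gN m j v * G (2*v)) - 4^j * ∑ v ∈ Icc 1 m, gN m j v * G v := by
            rw [h1, h2]
    -- moments of d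
    have hdmom : ∀ j', 1 ≤ j' → j' ≤ m → ∑ c ∈ Icc 1 (2*m), d c * (c:ℝ)^(2*j') = 0 := by
      intro j' hj'1 hj'2
      rw [hsplit (fun c => (c:ℝ)^(2*j'))]
      have e1 : ∑ v ∈ Icc 1 m, gN m j v * ((2*v : ℕ):ℝ)^(2*j')
          = 4^j' * ∑ v ∈ Icc 1 m, gN m j v * (v:ℝ)^(2*j') := by
        rw [Finset.mul_sum]
        apply Finset.sum_congr rfl
        intro v _
        push_cast
        rw [mul_pow]
        have : ((2:ℝ))^(2*j') = 4^j' := by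
          rw [pow_mul]; norm_num
        rw [this]
        ring
      rw [e1, gN_moment m j j' hj1 hj2 hj'1 hj'2]
      by_cases hjj : j' = j <;> simp [hjj]
    -- applied identity
    have happ : ∀ h : ℝ, ∑ c ∈ Icc 1 (2*m), d c * φ ((c:ℝ)*h) = F j (2*h) - 4^j * F j h := by
      intro h
      rw [hsplit (fun c => φ ((c:ℝ)*h))]
      congr 1
      · apply Finset.sum_congr rfl
        intro v _
        congr 2
        push_cast
        ring
    have := hrel d hdmom
    exact (this.congr' (Filter.Eventually.of_forall happ) (Filter.EventuallyEq.refl _ _))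
  -- each F j is o(h^n)
  have hFo : ∀ j, 1 ≤ j → j ≤ m → (fun h : ℝ => F j h) =o[𝓝[≠] (0:ℝ)] fun h => h^n := by
    intro j hj1 hj2
    exact core_lemma n m j hm hj1 hj2 φ (gN m j) (F j) (fun h => rfl) hφ (hdyadic j hj1 hj2)
  -- sum identity
  have hsum : ∀ h : ℝ, ∑ j ∈ Icc 1 m, F j h = φ h := by
    intro h
    rw [hFdef]
    simp only []
    rw [Finset.sum_comm]
    calc ∑ v ∈ Icc 1 m, ∑ j ∈ Icc 1 m, gN m j v * φ ((v:ℝ) * h)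
        = ∑ v ∈ Icc 1 m, (∑ j ∈ Icc 1 m, gN m j v) * φ ((v:ℝ) * h) := by
          apply Finset.sum_congr rfl
          intro v _
          rw [Finset.sum_mul]
      _ = ∑ v ∈ Icc 1 m, (if v = 1 then (1:ℝ) else 0) * φ ((v:ℝ) * h) := by
          apply Finset.sum_congr rfl
          intro v hv
          simp only [mem_Icc] at hv
          rw [gN_colsum m v hv.1 hv.2]
      _ = ∑ v ∈ Icc 1 m, (if v = 1 then φ ((v:ℝ) * h) else 0) := by
          apply Finset.sum_congr rfl
          intro v _
          split_ifs <;> simp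
      _ = φ h := by
          rw [Finset.sum_ite_eq' (Icc 1 m) 1 (fun v => φ ((v:ℝ)*h))]
          have h1 : (1:ℕ) ∈ Icc 1 m := by simp only [mem_Icc]; omega
          rw [if_pos h1]
          norm_num
  have : (fun h : ℝ => ∑ j ∈ Icc 1 m, F j h) =o[𝓝[≠] (0:ℝ)] fun h => h^n :=
    (Asymptotics.IsLittleO.sum (fun j hj => hFo j (Finset.mem_Icc.mp hj).1 (Finset.mem_Icc.mp hj).2)).congr_left
      (fun h => Finset.sum_apply h _ _)
  exact this.congr' (Filter.Eventually.of_forall hsum) (Filter.EventuallyEq.refl _ _)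

/-- Second fundamental lemma for even differences. Let `n ≥ 3` be odd, `m = (n-1)/2`,
and `f(h) = o(h^{n-1})` as `h → 0`. Suppose for each `r` with `m+1 ≤ r ≤ 2m` there is
an even difference `D_r` centered at `0`, with nonzero coefficients and distinct
integer nodes, of order at least `2(m+1)`, whose nodes include `±r` with all nodes in
`{0, ±1, …, ±r}`, such that `lim_{h→0} D_r(h)(f)/hⁿ` exists. Then
`lim_{h→0} [f(h) + f(-h)]/hⁿ` exists. -/
theorem second_fundamental_lemma_even (n : ℕ) (hn : 3 ≤ n) (hodd : Odd n)
    (m : ℕ) (hm : n = 2 * m + 1) (f : ℝ → ℝ)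
    (hf : (fun h : ℝ => f h) =o[𝓝[≠] (0:ℝ)] fun h => h ^ (n - 1))
    (M : ℕ → ℕ) (a : ∀ r : ℕ, Fin (M r + 1) → ℝ) (b : ∀ r : ℕ, Fin (M r + 1) → ℤ)
    (ha : ∀ r ∈ Finset.Icc (m + 1) (2 * m), ∀ i, a r i ≠ 0)
    (hbinj : ∀ r ∈ Finset.Icc (m + 1) (2 * m), Function.Injective (b r))
    (heven : ∀ r ∈ Finset.Icc (m + 1) (2 * m),
      (Finset.univ.val.map fun i : Fin (M r + 1) => (a r i, -(b r i))) =
        (Finset.univ.val.map fun i : Fin (M r + 1) => (a r i, b r i)))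
    (hord : ∀ r ∈ Finset.Icc (m + 1) (2 * m), ∀ k < 2 * (m + 1),
      ∑ i, a r i * (b r i : ℝ) ^ k = 0)
    (hnode_pos : ∀ r ∈ Finset.Icc (m + 1) (2 * m), ∃ i, b r i = (r : ℤ))
    (hnode_neg : ∀ r ∈ Finset.Icc (m + 1) (2 * m), ∃ i, b r i = -(r : ℤ))
    (hnodes : ∀ r ∈ Finset.Icc (m + 1) (2 * m), ∀ i, |b r i| ≤ (r : ℤ))
    (hlim : ∀ r ∈ Finset.Icc (m + 1) (2 * m), ∃ L : ℝ,
      Tendsto (fun h : ℝ => (∑ i, a r i * f ((b r i : ℝ) * h)) / h ^ n)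
        (𝓝[≠] 0) (𝓝 L)) :
    ∃ L : ℝ, Tendsto (fun h : ℝ => (f h + f (-h)) / h ^ n) (𝓝[≠] 0) (𝓝 L) := by
  classical
  have hm1 : 1 ≤ m := by omega
  have hn1 : n - 1 = 2 * m := by omega
  have hevenn1 : Even (n - 1) := ⟨m, by omega⟩
  set φ : ℝ → ℝ := fun x => f x + f (-x) with hφdef
  have hφeven : ∀ x : ℝ, φ (-x) = φ x := by
    intro x
    rw [hφdef]
    simp only [neg_neg]
    ring
  -- φ = o(h^(n-1))
  have hφo : (fun h : ℝ => φ h) =o[𝓝[≠] (0:ℝ)] fun h => h ^ (n-1) := by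
    have hneg0 : (fun h : ℝ => f (-h)) =o[𝓝[≠] (0:ℝ)] fun h : ℝ => (-h) ^ (n-1) :=
      hf.comp_tendsto aux_neg_tendsto
    have hneg : (fun h : ℝ => f (-h)) =o[𝓝[≠] (0:ℝ)] fun h : ℝ => h ^ (n-1) :=
      hneg0.congr' (Filter.EventuallyEq.refl _ _)
        (Filter.Eventually.of_forall (fun h => hevenn1.neg_pow h))
    exact hf.add hneg
  -- tendsto of φ to 0
  have hpowtend : Tendsto (fun t : ℝ => t ^ (n-1)) (𝓝[≠] (0:ℝ)) (𝓝 0) := by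
    have := (continuous_pow (n-1)).tendsto (0:ℝ)
    rw [zero_pow (by omega : n - 1 ≠ 0)] at this
    exact this.mono_left nhdsWithin_le_nhds
  have hphi0 : Tendsto φ (𝓝[≠] (0:ℝ)) (𝓝 0) := by
    have hmul : Tendsto (fun t : ℝ => (φ t / t^(n-1)) * t^(n-1)) (𝓝[≠] (0:ℝ)) (𝓝 (0 * 0)) :=
      (hφo.tendsto_div_nhds_zero).mul hpowtend
    rw [mul_zero] at hmul
    apply hmul.congr'
    apply eventually_nhdsWithin_of_forall
    intro t ht
    simp only [Set.mem_compl_iff, Set.mem_singleton_iff] at ht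
    show φ t / t ^ (n-1) * t ^ (n-1) = φ t
    rw [div_mul_cancel₀ _ (pow_ne_zero _ ht)]
  -- the folded coefficients
  set cc : ℕ → ℕ → ℝ :=
    fun r v => ∑ i ∈ univ.filter (fun i => (b r i).natAbs = v), a r i with hccdef
  -- fold identity
  have hfold : ∀ r ∈ Finset.Icc (m+1) (2*m), ∀ G : ℝ → ℝ, (∀ x, G (-x) = G x) →
      ∑ i, a r i * G ((b r i : ℤ) : ℝ) = cc r 0 * G 0 + ∑ v ∈ Icc 1 (2*m), cc r v * G (v : ℝ) := by
    intro r hr G hG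
    have hmaps : ∀ i ∈ (univ : Finset (Fin (M r + 1))), (b r i).natAbs ∈ Icc 0 (2*m) := by
      intro i _
      simp only [mem_Icc]
      refine ⟨by omega, ?_⟩
      have h1 := hnodes r hr i
      have hrm : r ≤ 2*m := (Finset.mem_Icc.mp hr).2
      have : ((b r i).natAbs : ℤ) ≤ (r:ℤ) := by
        rw [Int.abs_eq_natAbs] at h1
        exact h1
      have : (b r i).natAbs ≤ r := by exact_mod_cast this
      omega
    have hfib := Finset.sum_fiberwise_of_maps_to hmaps (fun i => a r i * G ((b r i : ℤ) : ℝ))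
    have hper : ∀ v ∈ Icc 0 (2*m),
        ∑ i ∈ univ.filter (fun i => (b r i).natAbs = v), a r i * G ((b r i : ℤ) : ℝ)
        = cc r v * G (v : ℝ) := by
      intro v _
      rw [hccdef]
      rw [Finset.sum_mul]
      apply Finset.sum_congr rfl
      intro i hi
      simp only [Finset.mem_filter] at hi
      have habs : (b r i).natAbs = v := hi.2
      rcases Int.natAbs_eq (b r i) with hcase | hcase
      · rw [hcase, habs]
        push_cast
        ring
      · rw [hcase, habs]
        push_cast
        rw [hG]
        try ring
    calc ∑ i, a r i * G ((b r i : ℤ) : ℝ)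
        = ∑ v ∈ Icc 0 (2*m), ∑ i ∈ univ.filter (fun i => (b r i).natAbs = v),
            a r i * G ((b r i : ℤ) : ℝ) := hfib.symm
      _ = ∑ v ∈ Icc 0 (2*m), cc r v * G (v:ℝ) := Finset.sum_congr rfl hper
      _ = cc r 0 * G 0 + ∑ v ∈ Icc 1 (2*m), cc r v * G (v:ℝ) := by
          rw [sum_Icc_zero_split (2*m) (fun v => cc r v * G (v:ℝ))]
          norm_num
  -- moments
  have hccmom : ∀ r, m+1 ≤ r → r ≤ 2*m → ∀ j', 1 ≤ j' → j' ≤ m →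
      ∑ v ∈ Icc 1 (2*m), cc r v * (v:ℝ)^(2*j') = 0 := by
    intro r h1 h2 j' hj1 hj2
    have hr : r ∈ Finset.Icc (m+1) (2*m) := Finset.mem_Icc.mpr ⟨h1, h2⟩
    have hG : ∀ x : ℝ, (-x)^(2*j') = x^(2*j') := fun x => (Even.neg_pow ⟨j', by omega⟩ x)
    have := hfold r hr (fun x => x^(2*j')) hG
    rw [hord r hr (2*j') (by omega)] at this
    rw [zero_pow (by omega : 2*j' ≠ 0), mul_zero, zero_add] at this
    exact this.symm
  -- support
  have hccsupp : ∀ r, m+1 ≤ r → r ≤ 2*m → ∀ v, r < v → cc r v = 0 := by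
    intro r h1 h2 v hv
    have hr : r ∈ Finset.Icc (m+1) (2*m) := Finset.mem_Icc.mpr ⟨h1, h2⟩
    rw [hccdef]
    apply Finset.sum_eq_zero
    intro i hi
    simp only [Finset.mem_filter] at hi
    exfalso
    have h1' := hnodes r hr i
    rw [Int.abs_eq_natAbs] at h1'
    have : (b r i).natAbs ≤ r := by exact_mod_cast h1'
    omega
  -- flip identity from evenness of the difference
  have hflip : ∀ r ∈ Finset.Icc (m+1) (2*m), ∀ g : ℤ → ℝ,
      ∑ i, a r i * g (-(b r i)) = ∑ i, a r i * g (b r i) := by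
    intro r hr g
    have hev := heven r hr
    have e1 : ∑ i, a r i * g (-(b r i))
        = ((Finset.univ.val.map fun i : Fin (M r + 1) => (a r i, -(b r i))).map
            (fun p : ℝ × ℤ => p.1 * g p.2)).sum := by
      rw [Multiset.map_map, Finset.sum_eq_multiset_sum]
      rfl
    have e2 : ∑ i, a r i * g (b r i)
        = ((Finset.univ.val.map fun i : Fin (M r + 1) => (a r i, b r i)).map
            (fun p : ℝ × ℤ => p.1 * g p.2)).sum := by
      rw [Multiset.map_map, Finset.sum_eq_multiset_sum]
      rfl
    rw [e1, e2, hev]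
  -- top coefficient
  have hcctop : ∀ r, m+1 ≤ r → r ≤ 2*m → cc r r ≠ 0 := by
    intro r h1 h2
    have hr : r ∈ Finset.Icc (m+1) (2*m) := Finset.mem_Icc.mpr ⟨h1, h2⟩
    obtain ⟨ip, hip⟩ := hnode_pos r hr
    obtain ⟨in', hin⟩ := hnode_neg r hr
    have hrpos : (0:ℤ) < (r:ℤ) := by exact_mod_cast (by omega : 0 < r)
    have hne : ip ≠ in' := by
      intro hcontr
      rw [hcontr, hin] at hip
      omega
    have hfilter : univ.filter (fun i => (b r i).natAbs = r) = {ip, in'} := by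
      ext i
      simp only [Finset.mem_filter, Finset.mem_univ, true_and, Finset.mem_insert,
        Finset.mem_singleton]
      constructor
      · intro hi
        have : b r i = (r:ℤ) ∨ b r i = -(r:ℤ) := by
          rcases Int.natAbs_eq (b r i) with hc | hc
          · left; rw [hc, hi]
          · right; rw [hc, hi]
        rcases this with hc | hc
        · left; exact hbinj r hr (by rw [hc, hip])
        · right; exact hbinj r hr (by rw [hc, hin])
      · intro hi
        rcases hi with hc | hc
        · rw [hc, hip]; simp
        · rw [hc, hin]; simp
    have haeq : a r in' = a r ip := by
      have hmem : (a r in', -(b r in')) ∈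
          (Finset.univ.val.map fun i : Fin (M r + 1) => (a r i, -(b r i))) :=
        Multiset.mem_map_of_mem _ (Finset.mem_univ in')
      rw [heven r hr] at hmem
      obtain ⟨i', _, heq⟩ := Multiset.mem_map.mp hmem
      have hb' : b r i' = (r:ℤ) := by
        have := congrArg Prod.snd heq
        simp only [] at this
        rw [this, hin]
        ring
      have hii : i' = ip := hbinj r hr (by rw [hb', hip])
      have ha' := congrArg Prod.fst heq
      simp only [] at ha'
      rw [hii] at ha'
      exact ha'.symm
    rw [hccdef]
    simp only []
    rw [hfilter, Finset.sum_pair hne, haeq]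
    have := ha r hr ip
    intro hcontr
    apply this
    linarith
  -- o-smallness of each folded relation
  have hccapp : ∀ r, m+1 ≤ r → r ≤ 2*m →
      (fun h : ℝ => ∑ v ∈ Icc 1 (2*m), cc r v * φ ((v:ℝ)*h)) =o[𝓝[≠] (0:ℝ)] fun h => h^n := by
    intro r h1 h2
    have hr : r ∈ Finset.Icc (m+1) (2*m) := Finset.mem_Icc.mpr ⟨h1, h2⟩
    set Sr : ℝ → ℝ := fun h => ∑ i, a r i * f ((b r i : ℝ) * h) with hSrdef
    obtain ⟨L, hL⟩ := hlim r hr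
    -- S is even
    have hSeven : ∀ h : ℝ, Sr (-h) = Sr h := by
      intro h
      rw [hSrdef]
      simp only []
      have e1 : ∀ i, (b r i : ℝ) * (-h) = ((-(b r i) : ℤ) : ℝ) * h := by
        intro i; push_cast; ring
      calc ∑ i, a r i * f ((b r i : ℝ) * (-h))
          = ∑ i, a r i * f (((-(b r i) : ℤ) : ℝ) * h) := by
            apply Finset.sum_congr rfl
            intro i _
            rw [e1 i]
        _ = ∑ i, a r i * f (((b r i : ℤ) : ℝ) * h) :=
            hflip r hr (fun z => f ((z : ℝ) * h))
    -- limit L is 0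
    have hL0 : L = 0 := by
      have hGneg : Tendsto (fun h : ℝ => Sr (-h) / (-h)^n) (𝓝[≠] (0:ℝ)) (𝓝 L) :=
        hL.comp aux_neg_tendsto
      have heq : (fun h : ℝ => Sr (-h) / (-h)^n) = fun h : ℝ => -(Sr h / h^n) := by
        funext h
        rw [hSeven h, hodd.neg_pow, div_neg]
      rw [heq] at hGneg
      have hGneg2 : Tendsto (fun h : ℝ => -(Sr h / h^n)) (𝓝[≠] (0:ℝ)) (𝓝 (-L)) := hL.neg
      have := tendsto_nhds_unique hGneg hGneg2
      linarith
    rw [hL0] at hL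
    -- Sr tends to 0
    have hpow' : Tendsto (fun t : ℝ => t ^ n) (𝓝[≠] (0:ℝ)) (𝓝 0) := by
      have := (continuous_pow n).tendsto (0:ℝ)
      rw [zero_pow (by omega : n ≠ 0)] at this
      exact this.mono_left nhdsWithin_le_nhds
    have hSr0 : Tendsto Sr (𝓝[≠] (0:ℝ)) (𝓝 0) := by
      have hmul : Tendsto (fun h : ℝ => (Sr h / h^n) * h^n) (𝓝[≠] (0:ℝ)) (𝓝 (0 * 0)) :=
        hL.mul hpow'
      rw [mul_zero] at hmul
      apply hmul.congr'
      apply eventually_nhdsWithin_of_forall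
      intro t ht
      simp only [Set.mem_compl_iff, Set.mem_singleton_iff] at ht
      show Sr t / t ^ n * t ^ n = Sr t
      rw [div_mul_cancel₀ _ (pow_ne_zero _ ht)]
    -- the φ-sum identity
    set Er : ℝ → ℝ := fun h => ∑ v ∈ Icc 1 (2*m), cc r v * φ ((v:ℝ)*h) with hErdef
    have h2S : ∀ h : ℝ, cc r 0 * φ 0 + Er h = 2 * Sr h := by
      intro h
      have hGeven : ∀ x : ℝ, φ (-x * h) = φ (x * h) := by
        intro x
        rw [neg_mul, hφeven]
      have := hfold r hr (fun x => φ (x * h)) (fun x => hGeven x)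
      rw [hErdef]
      simp only []
      rw [zero_mul] at this
      rw [← this]
      have expand : ∀ i, a r i * φ ((b r i : ℝ) * h)
          = a r i * f ((b r i : ℝ) * h) + a r i * f (((-(b r i) : ℤ) : ℝ) * h) := by
        intro i
        rw [hφdef]
        simp only []
        push_cast
        ring_nf
      calc ∑ i, a r i * φ ((b r i : ℝ) * h)
          = ∑ i, (a r i * f ((b r i : ℝ) * h) + a r i * f (((-(b r i) : ℤ) : ℝ) * h)) :=
            Finset.sum_congr rfl (fun i _ => expand i)
        _ = Sr h + ∑ i, a r i * f (((-(b r i) : ℤ) : ℝ) * h) := by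
            rw [Finset.sum_add_distrib]
        _ = Sr h + Sr h := by
            rw [hflip r hr (fun z => f ((z : ℝ) * h))]
        _ = 2 * Sr h := by ring
    -- Er tends to 0
    have hEr0 : Tendsto Er (𝓝[≠] (0:ℝ)) (𝓝 0) := by
      rw [hErdef]
      have hzero : (0:ℝ) = ∑ v ∈ Icc 1 (2*m), (0:ℝ) := by simp
      rw [hzero]
      apply tendsto_finset_sum
      intro v hv
      have hv1 : 1 ≤ v := (Finset.mem_Icc.mp hv).1
      have hphiv : Tendsto (fun h : ℝ => φ ((v:ℝ)*h)) (𝓝[≠] (0:ℝ)) (𝓝 0) :=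
        hphi0.comp (aux_mul_tendsto (v:ℝ) (by positivity))
      have := hphiv.const_mul (cc r v)
      simpa using this
    -- constant term is 0
    have hconst : cc r 0 * φ 0 = 0 := by
      have ht1 : Tendsto (fun h : ℝ => 2 * Sr h - Er h) (𝓝[≠] (0:ℝ)) (𝓝 (2 * 0 - 0)) :=
        (hSr0.const_mul 2).sub hEr0
      simp only [mul_zero, sub_zero] at ht1
      have ht2 : (fun h : ℝ => 2 * Sr h - Er h) = fun _ => cc r 0 * φ 0 := by
        funext h
        rw [← h2S h]
        ring
      rw [ht2] at ht1
      exact (tendsto_nhds_unique tendsto_const_nhds ht1)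
    have hEreq : ∀ h : ℝ, Er h = 2 * Sr h := by
      intro h
      have := h2S h
      rw [hconst] at this
      linarith
    -- conclude o-smallness
    have hside : ∀ᶠ h in 𝓝[≠] (0:ℝ), h^n = 0 → Er h = 0 := by
      apply eventually_nhdsWithin_of_forall
      intro h hh
      simp only [Set.mem_compl_iff, Set.mem_singleton_iff] at hh
      intro hcontr
      exact absurd hcontr (pow_ne_zero _ hh)
    have htend : Tendsto (fun h : ℝ => Er h / h^n) (𝓝[≠] (0:ℝ)) (𝓝 0) := by
      have : (fun h : ℝ => Er h / h^n) = fun h : ℝ => 2 * (Sr h / h^n) := by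
        funext h
        rw [hEreq h]
        ring
      rw [this]
      have := hL.const_mul (2:ℝ)
      simpa using this
    have := (isLittleO_iff_tendsto' hside).mpr htend
    exact this.congr' (Filter.Eventually.of_forall (fun h => by rw [hErdef])) 
      (Filter.EventuallyEq.refl _ _)
  -- apply span and key lemmas
  have hrel := span_lemma n m hm1 φ cc hccmom hccsupp hcctop hccapp
  have hφn : (fun h : ℝ => φ h) =o[𝓝[≠] (0:ℝ)] fun h => h ^ n :=
    key_lemma n m hm hm1 φ hφo hrel
  refine ⟨0, ?_⟩
  have := hφn.tendsto_div_nhds_zero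
  exact this
end

section
/- Let n ≥ 2 and let f be (n−1) times Peano differentiable at c. If the n exact generalized Riemann derivatives lim_{h→0} [∑_{j=0}^n (−1)^j C(n,j) f(c + (k−j)h)]/h^n exist for k = 1, 2, …, n, then f is n times Peano differentiable at c. -/
open Filter Topology Asymptotics Finset

lemma tendsto_mul_pn (a : ℝ) (ha : a ≠ 0) :
    Tendsto (fun h : ℝ => a * h) (𝓝[≠] (0:ℝ)) (𝓝[≠] (0:ℝ)) := by
  apply tendsto_nhdsWithin_of_tendsto_nhds_of_eventually_within
  · have h1 : Tendsto (fun h : ℝ => a * h) (𝓝 (0:ℝ)) (𝓝 (a * 0)) :=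
      (continuous_const.mul continuous_id).tendsto (0:ℝ)
    simpa using h1.mono_left nhdsWithin_le_nhds
  · filter_upwards [self_mem_nhdsWithin] with h hh
    exact mul_ne_zero ha hh

lemma fwdDiff_iter_poly_eval (n : ℕ) (d : ℝ) :
    ∀ (q : Polynomial ℝ), q.degree < (n : WithBot ℕ) →
      ∀ x : ℝ, (fwdDiff d)^[n] (fun t => q.eval t) x = 0 := by
  induction n with
  | zero =>
    intro q hq x
    have : q = 0 := by
      rw [← Polynomial.degree_eq_bot]
      exact Nat.WithBot.lt_zero_iff.mp (by exact_mod_cast hq)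
    simp [this]
  | succ n IH =>
    intro q hq x
    rw [Function.iterate_succ_apply]
    have hΔ : fwdDiff d (fun t => q.eval t) = fun t => ((Polynomial.taylor d q) - q).eval t := by
      funext t
      simp [fwdDiff, Polynomial.taylor_eval, add_comm]
    rw [hΔ]
    apply IH
    rcases eq_or_ne q 0 with rfl | hq0
    · simp only [map_zero, sub_zero, Polynomial.degree_zero]
      exact WithBot.bot_lt_coe n
    have hlc : (Polynomial.taylor d q).leadingCoeff = q.leadingCoeff := by
      rw [Polynomial.taylor_apply, Polynomial.leadingCoeff_comp (by simp)]
      simp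
    have htne : Polynomial.taylor d q ≠ 0 := by
      intro h0
      exact hq0 (by simpa [h0, Polynomial.leadingCoeff_eq_zero] using hlc.symm)
    have hdeg : (Polynomial.taylor d q).degree = q.degree := by
      rw [Polynomial.degree_eq_natDegree htne, Polynomial.degree_eq_natDegree hq0,
        Polynomial.natDegree_taylor]
    have h2 := Polynomial.degree_sub_lt hdeg htne hlc
    calc ((Polynomial.taylor d q) - q).degree < q.degree := by rwa [hdeg] at h2
      _ ≤ (n : WithBot ℕ) := by
          rcases Polynomial.degree_eq_natDegree hq0 ▸ hq with h3
          rw [Polynomial.degree_eq_natDegree hq0]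
          exact_mod_cast Nat.lt_succ_iff.mp (by exact_mod_cast h3)

lemma telescope_littleO (n d : ℕ) (hd : d < n) (hn : 1 ≤ n) (φ : ℝ → ℝ)
    (h1 : φ =o[𝓝[≠] (0:ℝ)] fun h => h ^ (n-1))
    (h2 : (fun h => φ (2*h) - 2^d * φ h) =o[𝓝[≠] (0:ℝ)] fun h => h ^ n) :
    φ =o[𝓝[≠] (0:ℝ)] fun h => h ^ n := by
  set e : ℝ → ℝ := fun u => φ (2*u) - 2^d * φ u with he
  have key : ∀ (m : ℕ) (h : ℝ), φ h
      = 2^(m*d) * φ (h / 2^m) + ∑ k ∈ range m, 2^(k*d) * e (h / 2^(k+1)) := by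
    intro m
    induction m with
    | zero => intro h; simp
    | succ m IH =>
      intro h
      have hsplit : 2 * (h / 2^(m+1)) = h / 2^m := by
        rw [pow_succ]; field_simp
      have hphi : φ (h / 2^m) = 2^d * φ (h / 2^(m+1)) + e (h / 2^(m+1)) := by
        simp only [he, hsplit]; ring
      have hp : (2:ℝ)^((m+1)*d) = 2^(m*d) * 2^d := by
        rw [add_mul, one_mul, pow_add]
      rw [IH h, hphi, sum_range_succ, hp]
      ring
  have hratio : Tendsto (fun u => φ u / u^(n-1)) (𝓝[≠] (0:ℝ)) (𝓝 0) :=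
    h1.tendsto_div_nhds_zero
  rw [isLittleO_iff]
  intro ε hε
  have h2' := isLittleO_iff.mp h2 (show (0:ℝ) < ε/2 by positivity)
  rw [eventually_nhdsWithin_iff, Metric.eventually_nhds_iff] at h2'
  obtain ⟨δ, hδpos, hδ⟩ := h2'
  have hev : ∀ᶠ h in 𝓝[≠] (0:ℝ), |h| < δ ∧ h ≠ 0 := by
    rw [eventually_nhdsWithin_iff]
    filter_upwards [Metric.ball_mem_nhds (0:ℝ) hδpos] with h hball hmem
    refine ⟨by simpa [Real.dist_eq] using hball, hmem⟩
  filter_upwards [hev] with h hh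
  obtain ⟨hhδ, hne⟩ := hh
  have hbound : ∀ m : ℕ, ‖φ h‖ ≤ |2^(m*d) * φ (h / 2^m)| + ε/2 * ‖h^n‖ := by
    intro m
    have hsum : |∑ k ∈ range m, 2^(k*d) * e (h / 2^(k+1))| ≤ ε/2 * |h|^n := by
      have hstep : ∀ k, |2^(k*d) * e (h / 2^(k+1))| ≤ ε/2 * |h|^n * (1/2)^(k+1) := by
        intro k
        have hk0 : (h / 2^(k+1) : ℝ) ≠ 0 := div_ne_zero hne (by positivity)
        have habs : |(h / 2^(k+1) : ℝ)| = |h| / 2^(k+1) := by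
          rw [abs_div, abs_pow, abs_two]
        have hkδ : dist (h / 2^(k+1) : ℝ) 0 < δ := by
          rw [Real.dist_eq, sub_zero, habs]
          calc |h| / 2^(k+1) ≤ |h| / 1 := by
                apply div_le_div_of_nonneg_left (abs_nonneg h) one_pos
                exact one_le_pow₀ one_le_two
            _ < δ := by simpa using hhδ
        have hbe : ‖e (h / 2^(k+1))‖ ≤ ε/2 * ‖(h / 2^(k+1))^n‖ := by
          exact hδ hkδ (by simpa using hk0)
        rw [Real.norm_eq_abs, Real.norm_eq_abs, abs_pow, habs] at hbe
        have hexp : (2:ℝ)^(k*d) * ((|h| / 2^(k+1))^n) ≤ |h|^n * (1/2)^(k+1) := by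
          have hnat : k*d + (k+1) ≤ (k+1)*n := by
            have h8 : (k+1)*(d+1) ≤ (k+1)*n := Nat.mul_le_mul_left _ (Nat.succ_le_of_lt hd)
            nlinarith [h8]
          have hexp2 : (2:ℝ)^(k*d) * 2^(k+1) ≤ 2^((k+1)*n) := by
            rw [← pow_add]
            exact pow_le_pow_right₀ one_le_two hnat
          have h2e : ((2:ℝ)^(k+1))^n = 2^((k+1)*n) := by rw [← pow_mul]
          have hq : (2:ℝ)^(k*d) / 2^((k+1)*n) ≤ 1 / 2^(k+1) := by
            rw [div_le_div_iff₀ (by positivity) (by positivity)]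
            linarith [hexp2]
          have h9 : ((1:ℝ)/2)^(k+1) = 1 / 2^(k+1) := by
            rw [div_pow, one_pow]
          calc (2:ℝ)^(k*d) * ((|h| / 2^(k+1))^n)
              = |h|^n * ((2:ℝ)^(k*d) / 2^((k+1)*n)) := by rw [div_pow, h2e]; ring
            _ ≤ |h|^n * (1 / 2^(k+1)) := by
                exact mul_le_mul_of_nonneg_left hq (by positivity)
            _ = |h|^n * (1/2)^(k+1) := by rw [h9]
        calc |2^(k*d) * e (h / 2^(k+1))| = 2^(k*d) * |e (h / 2^(k+1))| := by
              rw [abs_mul, abs_pow, abs_two]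
          _ ≤ 2^(k*d) * (ε/2 * (|h| / 2^(k+1))^n) := by
              apply mul_le_mul_of_nonneg_left hbe (by positivity)
          _ = (ε/2) * (2^(k*d) * (|h| / 2^(k+1))^n) := by ring
          _ ≤ (ε/2) * (|h|^n * (1/2)^(k+1)) := by
              apply mul_le_mul_of_nonneg_left hexp (by positivity)
          _ = ε/2 * |h|^n * (1/2)^(k+1) := by ring
      have hgeo : ∑ k ∈ range m, ((1:ℝ)/2)^(k+1) = 1 - (1/2)^m := by
        induction m with
        | zero => simp
        | succ m IH => rw [sum_range_succ, IH]; ring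
      calc |∑ k ∈ range m, 2^(k*d) * e (h / 2^(k+1))|
          ≤ ∑ k ∈ range m, |2^(k*d) * e (h / 2^(k+1))| := Finset.abs_sum_le_sum_abs _ _
        _ ≤ ∑ k ∈ range m, ε/2 * |h|^n * (1/2)^(k+1) := by
            exact Finset.sum_le_sum fun k _ => hstep k
        _ = ε/2 * |h|^n * (1 - (1/2)^m) := by rw [← mul_sum, hgeo]
        _ ≤ ε/2 * |h|^n := by
            have hc : (0:ℝ) ≤ ε/2 * |h|^n := by positivity
            nlinarith [mul_nonneg hc (pow_nonneg (show (0:ℝ) ≤ 1/2 by norm_num) m)]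
    calc ‖φ h‖ = |2^(m*d) * φ (h / 2^m) + ∑ k ∈ range m, 2^(k*d) * e (h / 2^(k+1))| := by
          rw [Real.norm_eq_abs, key m h]
      _ ≤ |2^(m*d) * φ (h / 2^m)| + |∑ k ∈ range m, 2^(k*d) * e (h / 2^(k+1))| := abs_add_le _ _
      _ ≤ |2^(m*d) * φ (h / 2^m)| + ε/2 * ‖h^n‖ := by
          rw [Real.norm_eq_abs, abs_pow]; exact add_le_add (le_refl _) hsum
  have hu : Tendsto (fun m : ℕ => h / 2^m) atTop (𝓝[≠] (0:ℝ)) := by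
    apply tendsto_nhdsWithin_of_tendsto_nhds_of_eventually_within
    · have h6 : Tendsto (fun m : ℕ => h * (1/2)^m) atTop (𝓝 (h * 0)) :=
        (tendsto_pow_atTop_nhds_zero_of_lt_one (by norm_num) (by norm_num)).const_mul h
      have h7 : (fun m : ℕ => h * (1/2)^m) = fun m : ℕ => h / 2^m := by
        funext m
        rw [one_div, inv_pow, ← div_eq_mul_inv]
      rw [h7] at h6; simpa using h6
    · filter_upwards with m
      exact div_ne_zero hne (by positivity)
  have hρ : Tendsto (fun m : ℕ => |φ (h/2^m) / (h/2^m)^(n-1)| * |h|^(n-1)) atTop (𝓝 0) := by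
    have := (hratio.comp hu).abs
    simpa using this.mul_const (|h|^(n-1))
  have hto : Tendsto (fun m : ℕ => |2^(m*d) * φ (h / 2^m)|) atTop (𝓝 0) := by
    apply squeeze_zero (fun m => abs_nonneg _) _ hρ
    intro m
    have hu0 : (h / 2^m : ℝ) ≠ 0 := div_ne_zero hne (by positivity)
    have habs : |(h / 2^m : ℝ)| = |h| / 2^m := by rw [abs_div, abs_pow, abs_two]
    have h5 : |φ (h/2^m)| = |φ (h/2^m) / (h/2^m)^(n-1)| * |h/2^m|^(n-1) := by
      rw [abs_div, abs_pow, div_mul_cancel₀]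
      exact pow_ne_zero _ (abs_ne_zero.mpr hu0)
    have hbd : (2:ℝ)^(m*d) * |h/2^m|^(n-1) ≤ |h|^(n-1) := by
      have hmle : (2:ℝ)^(m*d) ≤ 2^(m*(n-1)) :=
        pow_le_pow_right₀ one_le_two (Nat.mul_le_mul_left m (by omega))
      have hpw : (|h|/2^m)^(n-1) = |h|^(n-1) / 2^(m*(n-1)) := by
        rw [div_pow, ← pow_mul]
      calc (2:ℝ)^(m*d) * |h/2^m|^(n-1) = |h|^(n-1) * ((2:ℝ)^(m*d) / 2^(m*(n-1))) := by
            rw [habs, hpw]; ring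
        _ ≤ |h|^(n-1) * 1 := by
            apply mul_le_mul_of_nonneg_left _ (by positivity)
            rw [div_le_one (by positivity)]
            exact hmle
        _ = |h|^(n-1) := mul_one _
    calc |2^(m*d) * φ (h / 2^m)| = 2^(m*d) * |φ (h/2^m)| := by rw [abs_mul, abs_pow, abs_two]
      _ = |φ (h/2^m) / (h/2^m)^(n-1)| * (2^(m*d) * |h/2^m|^(n-1)) := by rw [h5]; ring
      _ ≤ |φ (h/2^m) / (h/2^m)^(n-1)| * |h|^(n-1) := by
          apply mul_le_mul_of_nonneg_left hbd (abs_nonneg _)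
  have hlim : Tendsto (fun m : ℕ => |2^(m*d) * φ (h / 2^m)| + ε/2 * ‖h^n‖) atTop
      (𝓝 (ε/2 * ‖h^n‖)) := by
    simpa using hto.add_const (ε/2 * ‖h^n‖)
  have hfin : ‖φ h‖ ≤ ε/2 * ‖h^n‖ := ge_of_tendsto' hlim hbound
  calc ‖φ h‖ ≤ ε/2 * ‖h^n‖ := hfin
    _ ≤ ε * ‖h^n‖ := by nlinarith [norm_nonneg (h^n)]

lemma SP_sum {ι : Type*} (n : ℕ) (s : Finset ι) (coef : ι → ℝ) (w : ι → ℝ → ℝ)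
    (H : ∀ i ∈ s, ∃ μ : ℝ, (fun h : ℝ => w i h - μ * h^n) =o[𝓝[≠] (0:ℝ)] fun h : ℝ => h^n) :
    ∃ μ : ℝ, (fun h : ℝ => (∑ i ∈ s, coef i * w i h) - μ * h^n)
      =o[𝓝[≠] (0:ℝ)] fun h : ℝ => h^n := by
  choose μ hμ using H
  refine ⟨∑ i ∈ s.attach, coef i.1 * μ i.1 i.2, ?_⟩
  have hlo : (fun h : ℝ => ∑ i ∈ s.attach, coef i.1 * (w i.1 h - μ i.1 i.2 * h^n))
      =o[𝓝[≠] (0:ℝ)] fun h : ℝ => h^n := by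
    apply Asymptotics.IsLittleO.fun_sum
    intro i _
    exact (hμ i.1 i.2).const_mul_left _
  have heq : (fun h : ℝ => (∑ i ∈ s, coef i * w i h)
      - (∑ i ∈ s.attach, coef i.1 * μ i.1 i.2) * h^n)
      = fun h : ℝ => ∑ i ∈ s.attach, coef i.1 * (w i.1 h - μ i.1 i.2 * h^n) := by
    funext h
    rw [← Finset.sum_attach s (fun i => coef i * w i h), Finset.sum_mul,
      ← Finset.sum_sub_distrib]
    apply Finset.sum_congr rfl
    intro i _
    ring
  rw [heq]
  exact hlo

lemma tendsto_littleO (A : ℝ → ℝ) (n : ℕ) (L : ℝ)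
    (hL : Tendsto (fun h : ℝ => A h / h^n) (𝓝[≠] (0:ℝ)) (𝓝 L)) :
    (fun h : ℝ => A h - L * h^n) =o[𝓝[≠] (0:ℝ)] fun h : ℝ => h^n := by
  have h1 : Tendsto (fun h : ℝ => A h / h^n - L) (𝓝[≠] (0:ℝ)) (𝓝 0) := by
    simpa using hL.sub_const L
  have h2 : (fun h : ℝ => A h / h^n - L) =o[𝓝[≠] (0:ℝ)] (fun _ : ℝ => (1:ℝ)) :=
    (isLittleO_one_iff ℝ).mpr h1
  have h3 := h2.mul_isBigO (isBigO_refl (fun h : ℝ => h^n) (𝓝[≠] (0:ℝ)))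
  apply h3.congr' ?_ ?_
  · filter_upwards [self_mem_nhdsWithin] with h hh
    have hp : (h:ℝ)^n ≠ 0 := pow_ne_zero _ hh
    field_simp
  · filter_upwards with h
    rw [one_mul]

lemma alt_sum_poly_eval (n : ℕ) (q : Polynomial ℝ) (hq : q.degree < (n : WithBot ℕ)) (x d : ℝ) :
    ∑ j ∈ range (n + 1), (-1:ℝ)^j * (n.choose j : ℝ) * q.eval (x + j * d) = 0 := by
  have H := fwdDiff_iter_eq_sum_shift d (fun t => q.eval t) n x
  rw [fwdDiff_iter_poly_eval n d q hq x] at H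
  have key : ∑ j ∈ range (n + 1), (-1:ℝ)^j * (n.choose j : ℝ) * q.eval (x + j * d)
      = (-1:ℝ)^n * ∑ j ∈ range (n + 1),
          ((-1 : ℤ) ^ (n - j) * (n.choose j : ℤ)) • q.eval (x + j • d) := by
    rw [mul_sum]
    apply sum_congr rfl
    intro j hj
    have hjn : j ≤ n := Nat.lt_succ_iff.mp (mem_range.mp hj)
    have hsmul : (j : ℕ) • d = (j:ℝ) * d := nsmul_eq_mul j d
    rw [zsmul_eq_mul, hsmul]
    push_cast
    have hsign : (-1:ℝ)^n * (-1:ℝ)^(n-j) = (-1:ℝ)^j := by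
      have h1 : (-1:ℝ)^(n-j) * (-1:ℝ)^j = (-1:ℝ)^n := by
        rw [← pow_add, Nat.sub_add_cancel hjn]
      have h2 : (-1:ℝ)^(n-j) * (-1:ℝ)^(n-j) = 1 := by
        rw [← pow_add]; exact Even.neg_one_pow ⟨n-j, rfl⟩
      calc (-1:ℝ)^n * (-1:ℝ)^(n-j) = ((-1:ℝ)^(n-j) * (-1:ℝ)^j) * (-1:ℝ)^(n-j) := by rw [h1]
        _ = ((-1:ℝ)^(n-j) * (-1:ℝ)^(n-j)) * (-1:ℝ)^j := by ring
        _ = (-1:ℝ)^j := by rw [h2]; ring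
    linear_combination ((n.choose j : ℝ) * q.eval (x + (j:ℝ) * d)) * hsign.symm
  rw [key, ← H, mul_zero]

/-- The GGR theorem: if `f` is `n-1` times Peano differentiable at `c` and the `n`
generalized Riemann derivatives
`lim_{h→0} (∑_{j=0}^n (-1)^j C(n,j) f(c + (k-j)h))/hⁿ` exist for `k = 1, …, n`,
then `f` is `n` times Peano differentiable at `c`. -/
theorem GGR (n : ℕ) (hn : 2 ≤ n) (f : ℝ → ℝ) (c : ℝ)
    (hPeano : PeanoDifferentiable (n - 1) f c)
    (hlim : ∀ k ∈ Finset.Icc 1 n, ∃ L : ℝ,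
      Tendsto (fun h : ℝ =>
          (∑ j ∈ Finset.range (n + 1),
            (-1 : ℝ) ^ j * (Nat.choose n j : ℝ) * f (c + ((k : ℝ) - j) * h)) / h ^ n)
        (𝓝[≠] 0) (𝓝 L)) :
    PeanoDifferentiable n f c := by
  obtain ⟨p, hpdeg, hpo⟩ := hPeano
  have hn0 : 0 < n := by omega
  set g : ℝ → ℝ := fun t => f (c + t) - p.eval (c + t) with hgdef
  have hpdeg' : p.degree < (n : WithBot ℕ) := by
    refine lt_of_le_of_lt hpdeg ?_
    exact WithBot.coe_lt_coe.mpr (Nat.sub_lt hn0 one_pos)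
  have hg : (fun h : ℝ => g h) =o[𝓝[≠] (0:ℝ)] fun h => h ^ (n-1) := hpo
  have hgcomp : ∀ x : ℝ, x ≠ 0 → (fun h => g (x * h)) =o[𝓝[≠] (0:ℝ)] fun h => h ^ (n-1) := by
    intro x hx
    have h1 := hg.comp_tendsto (tendsto_mul_pn x hx)
    have h2 : (fun h : ℝ => (x*h)^(n-1)) =O[𝓝[≠] (0:ℝ)] fun h => h^(n-1) := by
      have he : (fun h : ℝ => (x*h)^(n-1)) = fun h => x^(n-1) * h^(n-1) := by
        funext h; rw [mul_pow]
      rw [he]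
      exact (isBigO_refl (fun h : ℝ => h^(n-1)) _).const_mul_left _
    exact h1.trans_isBigO h2
  have htendszero : ∀ x : ℝ, x ≠ 0 → Tendsto (fun h => g (x*h)) (𝓝[≠] (0:ℝ)) (𝓝 0) := by
    intro x hx
    apply (hgcomp x hx).isBigO.trans_tendsto
    have h3 := (continuous_pow (n-1)).tendsto (0:ℝ)
    rw [zero_pow (by omega : n - 1 ≠ 0)] at h3
    exact h3.mono_left nhdsWithin_le_nhds
  have hAg : ∀ (κ : ℝ) (h : ℝ), ∑ j ∈ Finset.range (n + 1),
        (-1:ℝ)^j * (n.choose j : ℝ) * f (c + (κ - j) * h)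
      = ∑ j ∈ Finset.range (n + 1), (-1:ℝ)^j * (n.choose j : ℝ) * g ((κ - j) * h) := by
    intro κ h
    have hp0 : ∑ j ∈ Finset.range (n + 1),
        (-1:ℝ)^j * (n.choose j : ℝ) * p.eval ((c + κ*h) + j * (-h)) = 0 :=
      alt_sum_poly_eval n p hpdeg' (c + κ*h) (-h)
    have hterm : ∀ j ∈ Finset.range (n+1), (-1:ℝ)^j * (n.choose j : ℝ) * f (c + (κ - j) * h)
        = (-1:ℝ)^j * (n.choose j : ℝ) * g ((κ - j) * h)
          + (-1:ℝ)^j * (n.choose j : ℝ) * p.eval ((c + κ*h) + j * (-h)) := by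
      intro j _
      have e1 : (c + κ*h) + (j:ℝ) * (-h) = c + (κ - j) * h := by ring
      have e2 : f (c + (κ - j) * h) = g ((κ - j) * h) + p.eval (c + (κ - j) * h) := by
        simp [hgdef]
      rw [e1, e2]; ring
    rw [Finset.sum_congr rfl hterm, Finset.sum_add_distrib, hp0, add_zero]
  have hinj : Set.InjOn (fun i : ℕ => (i:ℝ)) (Finset.range n) :=
    fun a _ b _ hab => Nat.cast_injective hab
  set Q : ℝ → Polynomial ℝ := fun h => Lagrange.interpolate (Finset.range n)
      (fun i : ℕ => (i:ℝ)) (fun i => g (i * h)) with hQdef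
  have hQdeg : ∀ h, (Q h).degree < (n : WithBot ℕ) := by
    intro h
    have h4 := Lagrange.degree_interpolate_lt (fun i : ℕ => g (i * h)) hinj
    simpa [hQdef] using h4
  have hQnat : ∀ h, (Q h).natDegree < n := by
    intro h
    rcases eq_or_ne (Q h) 0 with h0 | h0
    · rw [h0]; simpa using hn0
    · exact (Polynomial.natDegree_lt_iff_degree_lt h0).mpr (hQdeg h)
  have hQnode : ∀ (h : ℝ) (i : ℕ), i < n → (Q h).eval (i:ℝ) = g (i * h) := by
    intro h i hi
    exact Lagrange.eval_interpolate_at_node _ hinj (Finset.mem_range.mpr hi)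
  have hQeval : ∀ (h x : ℝ), (Q h).eval x = ∑ d ∈ Finset.range n, (Q h).coeff d * x^d :=
    fun h x => Polynomial.eval_eq_sum_range' (hQnat h) x
  -- g 0 = 0
  have hg0 : g 0 = 0 := by
    obtain ⟨L, hL⟩ := hlim 1 (Finset.mem_Icc.mpr ⟨le_refl 1, by omega⟩)
    have hpow : Tendsto (fun h : ℝ => h^n) (𝓝[≠] (0:ℝ)) (𝓝 0) := by
      have h3 := (continuous_pow n).tendsto (0:ℝ)
      rw [zero_pow (by omega : n ≠ 0)] at h3
      exact h3.mono_left nhdsWithin_le_nhds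
    have hA0 : Tendsto (fun h : ℝ => ∑ j ∈ Finset.range (n + 1),
        (-1:ℝ)^j * (n.choose j : ℝ) * f (c + (((1:ℕ):ℝ) - j) * h)) (𝓝[≠] (0:ℝ)) (𝓝 0) := by
      have h1 := hL.mul hpow
      rw [mul_zero] at h1
      refine Tendsto.congr' ?_ h1
      filter_upwards [self_mem_nhdsWithin] with h hh
      rw [div_mul_cancel₀ _ (pow_ne_zero _ (by simpa using hh))]
    have hA1 : Tendsto (fun h : ℝ => ∑ j ∈ Finset.range (n + 1),
        (-1:ℝ)^j * (n.choose j : ℝ) * g ((((1:ℕ):ℝ) - j) * h)) (𝓝[≠] (0:ℝ))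
        (𝓝 (-(n:ℝ) * g 0)) := by
      have hlimsum : Tendsto (fun h : ℝ => ∑ j ∈ Finset.range (n + 1),
          (-1:ℝ)^j * (n.choose j : ℝ) * g ((((1:ℕ):ℝ) - j) * h)) (𝓝[≠] (0:ℝ))
          (𝓝 (∑ j ∈ Finset.range (n + 1), if j = 1 then -(n:ℝ) * g 0 else 0)) := by
        apply tendsto_finset_sum
        intro j _
        by_cases hj1 : j = 1
        · subst hj1
          rw [if_pos rfl]
          have he : (fun b : ℝ => (-1:ℝ)^1 * (n.choose 1 : ℝ) * g ((((1:ℕ):ℝ) - ((1:ℕ):ℝ)) * b))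
              = fun _ : ℝ => -(n:ℝ) * g 0 := by
            funext b
            norm_num [Nat.choose_one_right]
          rw [he]
          exact tendsto_const_nhds
        · have hx : ((1:ℕ):ℝ) - (j:ℝ) ≠ 0 := by
            intro h0
            apply hj1
            have : (j:ℝ) = 1 := by push_cast at h0 ⊢; linarith
            exact_mod_cast this
          rw [if_neg hj1]
          have h2 := (htendszero _ hx).const_mul ((-1:ℝ)^j * (n.choose j : ℝ))
          rw [mul_zero] at h2
          exact h2
      rw [Finset.sum_ite_eq' (Finset.range (n+1)) 1 (fun _ => -(n:ℝ) * g 0),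
        if_pos (Finset.mem_range.mpr (by omega))] at hlimsum
      exact hlimsum
    have heq : (fun h : ℝ => ∑ j ∈ Finset.range (n + 1),
        (-1:ℝ)^j * (n.choose j : ℝ) * f (c + (((1:ℕ):ℝ) - j) * h))
        = fun h : ℝ => ∑ j ∈ Finset.range (n + 1),
          (-1:ℝ)^j * (n.choose j : ℝ) * g ((((1:ℕ):ℝ) - j) * h) := by
      funext h; exact hAg ((1:ℕ):ℝ) h
    rw [heq] at hA0
    have huniq := tendsto_nhds_unique hA0 hA1
    have hnne : (n:ℝ) ≠ 0 := Nat.cast_ne_zero.mpr (by omega)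
    rcases mul_eq_zero.mp huniq.symm with h | h
    · exact absurd (neg_eq_zero.mp h) hnne
    · exact h
  -- difference equations in interpolation-error form
  have hT : ∀ k : ℕ, 1 ≤ k → k ≤ n → ∃ L : ℝ,
      (fun h : ℝ => (∑ j ∈ Finset.range (n+1), (-1:ℝ)^j * (n.choose j : ℝ) *
          (g (((k:ℝ) - j) * h) - (Q h).eval ((k:ℝ) - j))) - L * h^n)
        =o[𝓝[≠] (0:ℝ)] fun h : ℝ => h^n := by
    intro k hk1 hkn
    obtain ⟨L, hL⟩ := hlim k (Finset.mem_Icc.mpr ⟨hk1, hkn⟩)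
    refine ⟨L, ?_⟩
    have h1 := tendsto_littleO _ n L hL
    have heq : (fun h : ℝ => (∑ j ∈ Finset.range (n+1), (-1:ℝ)^j * (n.choose j : ℝ) *
        f (c + ((k:ℝ) - j) * h)) - L * h^n)
        = fun h : ℝ => (∑ j ∈ Finset.range (n+1), (-1:ℝ)^j * (n.choose j : ℝ) *
          (g (((k:ℝ) - j) * h) - (Q h).eval ((k:ℝ) - j))) - L * h^n := by
      funext h
      rw [hAg (k:ℝ) h]
      congr 1
      have hQ0 : ∑ j ∈ Finset.range (n+1), (-1:ℝ)^j * (n.choose j : ℝ) *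
          (Q h).eval ((k:ℝ) + j * (-1)) = 0 :=
        alt_sum_poly_eval n (Q h) (hQdeg h) (k:ℝ) (-1)
      have hterm : ∀ j ∈ Finset.range (n+1), (-1:ℝ)^j * (n.choose j : ℝ) * g (((k:ℝ) - j) * h)
          = (-1:ℝ)^j * (n.choose j : ℝ) * (g (((k:ℝ) - j) * h) - (Q h).eval ((k:ℝ) - j))
            + (-1:ℝ)^j * (n.choose j : ℝ) * (Q h).eval ((k:ℝ) + j * (-1)) := by
        intro j _
        have e1 : (k:ℝ) + (j:ℝ) * (-1) = (k:ℝ) - j := by ring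
        rw [e1]; ring
      rw [Finset.sum_congr rfl hterm, Finset.sum_add_distrib, hQ0, add_zero]
    rw [← heq]
    exact h1
  -- downward recursion for negative nodes
  have hrS : ∀ m : ℕ, 1 ≤ m → m ≤ n - 1 → ∃ μ : ℝ,
      (fun h : ℝ => (g (-((m:ℕ):ℝ) * h) - (Q h).eval (-((m:ℕ):ℝ))) - μ * h^n)
        =o[𝓝[≠] (0:ℝ)] fun h : ℝ => h^n := by
    intro m
    induction m using Nat.strong_induction_on with
    | _ m IH =>
    intro hm1 hmn
    obtain ⟨m', rfl⟩ : ∃ m', m = m' + 1 := ⟨m - 1, by omega⟩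
    set k := n - (m' + 1) with hk
    have hk1 : 1 ≤ k := by omega
    have hkn : k ≤ n := by omega
    obtain ⟨L, hL⟩ := hT k hk1 hkn
    have hsplit : ∀ h : ℝ, ∑ j ∈ Finset.range (n+1), (-1:ℝ)^j * (n.choose j : ℝ) *
          (g (((k:ℝ) - j) * h) - (Q h).eval ((k:ℝ) - j))
        = ∑ i ∈ Finset.range (m'+1), (-1:ℝ)^(k+1+i) * (n.choose (k+1+i) : ℝ) *
          (g (-(((i+1:ℕ)):ℝ) * h) - (Q h).eval (-(((i+1:ℕ)):ℝ))) := by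
      intro h
      rw [Finset.range_eq_Ico,
        ← Finset.sum_Ico_consecutive _ (Nat.zero_le (k+1)) (by omega : k+1 ≤ n+1)]
      have hz : ∑ j ∈ Finset.Ico 0 (k+1), (-1:ℝ)^j * (n.choose j : ℝ) *
          (g (((k:ℝ) - j) * h) - (Q h).eval ((k:ℝ) - j)) = 0 := by
        apply Finset.sum_eq_zero
        intro j hj
        have hjk : j ≤ k := by
          have := Finset.mem_Ico.mp hj
          omega
        have hcast : (k:ℝ) - (j:ℝ) = ((k - j : ℕ) : ℝ) := by
          push_cast [Nat.cast_sub hjk]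
          ring
        rw [hcast, hQnode h (k - j) (by omega), sub_self, mul_zero]
      rw [hz, zero_add, Finset.sum_Ico_eq_sum_range]
      have hcnt : n + 1 - (k+1) = m' + 1 := by omega
      rw [hcnt]
      apply Finset.sum_congr rfl
      intro i _
      have hcast2 : (k:ℝ) - ((k+1+i : ℕ):ℝ) = -(((i+1:ℕ)):ℝ) := by push_cast; ring
      rw [hcast2]
    have htotal : (fun h : ℝ => (∑ i ∈ Finset.range (m'+1),
          (-1:ℝ)^(k+1+i) * (n.choose (k+1+i) : ℝ) *
          (g (-(((i+1:ℕ)):ℝ) * h) - (Q h).eval (-(((i+1:ℕ)):ℝ)))) - L * h^n)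
        =o[𝓝[≠] (0:ℝ)] fun h : ℝ => h^n := by
      apply hL.congr' ?_ EventuallyEq.rfl
      filter_upwards with h
      rw [hsplit h]
    obtain ⟨μP, hμP⟩ := SP_sum n (Finset.range m')
      (fun i => (-1:ℝ)^(k+1+i) * (n.choose (k+1+i) : ℝ))
      (fun i h => g (-(((i+1:ℕ)):ℝ) * h) - (Q h).eval (-(((i+1:ℕ)):ℝ)))
      (by
        intro i hi
        have hi' : i < m' := Finset.mem_range.mp hi
        exact IH (i+1) (by omega) (by omega) (by omega))
    have hsq : (-1:ℝ)^n * (-1:ℝ)^n = 1 := by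
      rw [← pow_add]; exact Even.neg_one_pow ⟨n, rfl⟩
    refine ⟨(-1:ℝ)^n * (L - μP), ?_⟩
    have hcomb := (htotal.sub hμP).const_mul_left ((-1:ℝ)^n)
    apply hcomb.congr' ?_ EventuallyEq.rfl
    filter_upwards with h
    have hlast : (∑ i ∈ Finset.range (m'+1), (-1:ℝ)^(k+1+i) * (n.choose (k+1+i) : ℝ) *
          (g (-(((i+1:ℕ)):ℝ) * h) - (Q h).eval (-(((i+1:ℕ)):ℝ))))
        = (∑ i ∈ Finset.range m', (-1:ℝ)^(k+1+i) * (n.choose (k+1+i) : ℝ) *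
          (g (-(((i+1:ℕ)):ℝ) * h) - (Q h).eval (-(((i+1:ℕ)):ℝ))))
          + (-1:ℝ)^n * (g (-(((m'+1:ℕ)):ℝ) * h) - (Q h).eval (-(((m'+1:ℕ)):ℝ))) := by
      rw [Finset.sum_range_succ]
      have he : k+1+m' = n := by omega
      rw [he, Nat.choose_self]
      norm_num
    rw [hlast]
    linear_combination ((g (-(((m'+1:ℕ)):ℝ) * h) - (Q h).eval (-(((m'+1:ℕ)):ℝ))) : ℝ) * hsq
  -- all integer nodes in [1-n, n]
  have hSI : ∀ i : ℤ, 1-(n:ℤ) ≤ i → i ≤ (n:ℤ) → ∃ μ : ℝ,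
      (fun h : ℝ => (g ((i:ℝ) * h) - (Q h).eval (i:ℝ)) - μ * h^n)
        =o[𝓝[≠] (0:ℝ)] fun h : ℝ => h^n := by
    intro i h1 h2
    rcases lt_or_ge i 0 with hneg | hpos
    · obtain ⟨m, rfl⟩ : ∃ m : ℕ, i = -(m:ℤ) := ⟨(-i).toNat, by omega⟩
      obtain ⟨μ, hμ⟩ := hrS m (by omega) (by omega)
      refine ⟨μ, ?_⟩
      apply hμ.congr' ?_ EventuallyEq.rfl
      filter_upwards with h
      push_cast
      ring_nf
    · obtain ⟨t, rfl⟩ : ∃ t : ℕ, i = (t:ℤ) := ⟨i.toNat, by omega⟩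
      have ht : t ≤ n := by exact_mod_cast h2
      by_cases htn : t = n
      · subst htn
        obtain ⟨L, hL⟩ := hT t (by omega) le_rfl
        refine ⟨L, ?_⟩
        apply hL.congr' ?_ EventuallyEq.rfl
        filter_upwards with h
        have hsum1 : ∑ j ∈ Finset.range (t+1), (-1:ℝ)^j * (t.choose j : ℝ) *
            (g (((t:ℝ) - j) * h) - (Q h).eval ((t:ℝ) - j))
            = g ((t:ℝ) * h) - (Q h).eval ((t:ℝ)) := by
          rw [Finset.sum_eq_single_of_mem 0 (Finset.mem_range.mpr (by omega))]
          · norm_num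
          · intro j hj hj0
            have hjn : j ≤ t := by
              have := Finset.mem_range.mp hj; omega
            have hj1 : 1 ≤ j := by omega
            have hcast : (t:ℝ) - (j:ℝ) = ((t - j : ℕ):ℝ) := by
              push_cast [Nat.cast_sub hjn]; ring
            rw [hcast, hQnode h (t-j) (by omega), sub_self, mul_zero]
        rw [hsum1]
        push_cast
        ring_nf
      · refine ⟨0, ?_⟩
        have hz : (fun h : ℝ => (g ((((t:ℕ):ℤ):ℝ) * h) - (Q h).eval (((t:ℕ):ℤ):ℝ)) - 0 * h^n)
            = fun _ : ℝ => (0:ℝ) := by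
          funext h
          push_cast
          rw [hQnode h t (by omega)]
          ring
        rw [hz]
        exact isLittleO_zero _ _
  -- coefficients of Q are o(h^(n-1))
  have hcoO : ∀ d : ℕ, (fun h => (Q h).coeff d) =o[𝓝[≠] (0:ℝ)] fun h : ℝ => h ^ (n-1) := by
    intro d
    have hcoeq : ∀ h : ℝ, (Q h).coeff d = ∑ i ∈ Finset.range n,
        (Lagrange.basis (Finset.range n) (fun i : ℕ => (i:ℝ)) i).coeff d * g ((i:ℝ) * h) := by
      intro h
      simp only [hQdef]
      rw [Lagrange.interpolate_apply, Polynomial.finset_sum_coeff]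
      apply Finset.sum_congr rfl
      intro i _
      rw [Polynomial.coeff_C_mul]
      ring
    have hsum : (fun h : ℝ => ∑ i ∈ Finset.range n,
        (Lagrange.basis (Finset.range n) (fun i : ℕ => (i:ℝ)) i).coeff d * g ((i:ℝ) * h))
        =o[𝓝[≠] (0:ℝ)] fun h : ℝ => h ^ (n-1) := by
      apply Asymptotics.IsLittleO.fun_sum
      intro i _
      rcases eq_or_ne i 0 with rfl | hi0
      · have hz : (fun h : ℝ =>
            (Lagrange.basis (Finset.range n) (fun i : ℕ => (i:ℝ)) 0).coeff d * g (((0:ℕ):ℝ) * h))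
            = fun _ => (0:ℝ) := by
          funext h
          norm_num [hg0]
        rw [hz]
        exact isLittleO_zero _ _
      · exact (hgcomp (i:ℝ) (Nat.cast_ne_zero.mpr hi0)).const_mul_left _
    apply hsum.congr' ?_ EventuallyEq.rfl
    filter_upwards with h
    rw [hcoeq h]
  -- cross-scale comparison
  have hcross : ∀ j : ℤ, 1-(n:ℤ) ≤ 2*j → 2*j ≤ (n:ℤ) → ∃ μ : ℝ,
      (fun h : ℝ => ((Q (2*h)).eval (j:ℝ) - (Q h).eval ((2*j : ℤ):ℝ)) - μ * h^n)
        =o[𝓝[≠] (0:ℝ)] fun h : ℝ => h^n := by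
    intro j hj1 hj2
    obtain ⟨μ1, hμ1⟩ := hSI (2*j) hj1 hj2
    obtain ⟨μ2, hμ2⟩ := hSI j (by omega) (by omega)
    have hμ2' : (fun h : ℝ => (g ((j:ℝ) * (2*h)) - (Q (2*h)).eval (j:ℝ)) - (2^n * μ2) * h^n)
        =o[𝓝[≠] (0:ℝ)] fun h : ℝ => h^n := by
      have hc := hμ2.comp_tendsto (tendsto_mul_pn 2 two_ne_zero)
      have hO : (fun h : ℝ => (2*h)^n) =O[𝓝[≠] (0:ℝ)] fun h : ℝ => h^n := by
        have he : (fun h : ℝ => (2*h)^n) = fun h : ℝ => 2^n * h^n := by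
          funext h; rw [mul_pow]
        rw [he]; exact (isBigO_refl _ _).const_mul_left _
      have hco := hc.trans_isBigO hO
      apply hco.congr' ?_ EventuallyEq.rfl
      filter_upwards with h
      simp only [Function.comp_apply]
      ring
    refine ⟨μ1 - 2^n * μ2, ?_⟩
    have hcomb := hμ1.sub hμ2'
    apply hcomb.congr' ?_ EventuallyEq.rfl
    filter_upwards with h
    have harg : ((2*j : ℤ):ℝ) * h = (j:ℝ) * (2*h) := by push_cast; ring
    rw [harg]
    ring
  -- dyadic coefficient relation
  have hud : ∀ d ∈ Finset.range n, ∃ β : ℝ,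
      (fun h : ℝ => ((Q (2*h)).coeff d - 2^d * (Q h).coeff d) - β * h^n)
        =o[𝓝[≠] (0:ℝ)] fun h : ℝ => h^n := by
    intro d hd
    have hdn : d < n := Finset.mem_range.mp hd
    set J0 : Finset ℤ := Finset.Icc (-(((n-1)/2 : ℕ) : ℤ)) (((n/2 : ℕ) : ℤ)) with hJ0
    have hJcard : J0.card = n := by
      rw [hJ0, Int.card_Icc]
      omega
    have hJinj : Set.InjOn (fun j : ℤ => (j:ℝ)) J0 := fun x _ y _ hxy => Int.cast_injective hxy
    set u : ℕ → ℝ → ℝ := fun e h => (Q (2*h)).coeff e - 2^e * (Q h).coeff e with hu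
    set U : ℝ → Polynomial ℝ := fun h => ∑ e ∈ Finset.range n,
      Polynomial.C (u e h) * Polynomial.X^e with hU
    have hUdeg : ∀ h, (U h).degree < (n : WithBot ℕ) := by
      intro h
      apply lt_of_le_of_lt (Polynomial.degree_sum_le _ _)
      rw [Finset.sup_lt_iff (by exact_mod_cast WithBot.bot_lt_coe n)]
      intro e he
      apply lt_of_le_of_lt (Polynomial.degree_C_mul_X_pow_le _ _)
      exact_mod_cast Finset.mem_range.mp he
    have hUeval : ∀ h x, (U h).eval x = ∑ e ∈ Finset.range n, u e h * x^e := by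
      intro h x
      rw [hU]
      simp [Polynomial.eval_finset_sum]
    have hUevalQ : ∀ h x, (U h).eval x = (Q (2*h)).eval x - (Q h).eval (2*x) := by
      intro h x
      rw [hUeval, hQeval (2*h) x, hQeval h (2*x), ← Finset.sum_sub_distrib]
      apply Finset.sum_congr rfl
      intro e _
      rw [hu]
      rw [mul_pow]
      ring
    have hUcoeff : ∀ h, (U h).coeff d = u d h := by
      intro h
      rw [hU, Polynomial.finset_sum_coeff, Finset.sum_eq_single_of_mem d hd]
      · rw [Polynomial.coeff_C_mul, Polynomial.coeff_X_pow, if_pos rfl, mul_one]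
      · intro e _ hed
        rw [Polynomial.coeff_C_mul, Polynomial.coeff_X_pow, if_neg (Ne.symm hed), mul_zero]
    have hUinterp : ∀ h, U h = Lagrange.interpolate J0 (fun j : ℤ => (j:ℝ))
        (fun j => (U h).eval ((j:ℤ):ℝ)) := by
      intro h
      apply Lagrange.eq_interpolate hJinj
      rw [hJcard]
      exact hUdeg h
    have hcoeffsum : ∀ h, u d h = ∑ j ∈ J0,
        (U h).eval ((j:ℤ):ℝ) * (Lagrange.basis J0 (fun j : ℤ => (j:ℝ)) j).coeff d := by
      intro h
      conv_lhs => rw [← hUcoeff h, hUinterp h]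
      rw [Lagrange.interpolate_apply, Polynomial.finset_sum_coeff]
      apply Finset.sum_congr rfl
      intro j _
      rw [Polynomial.coeff_C_mul]
    have hvalS : ∀ j ∈ J0, ∃ μ : ℝ,
        (fun h : ℝ => (U h).eval ((j:ℤ):ℝ) - μ * h^n) =o[𝓝[≠] (0:ℝ)] fun h : ℝ => h^n := by
      intro j hj
      have hjb := Finset.mem_Icc.mp (hJ0 ▸ hj)
      obtain ⟨μ, hμ⟩ := hcross j (by omega) (by omega)
      refine ⟨μ, ?_⟩
      apply hμ.congr' ?_ EventuallyEq.rfl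
      filter_upwards with h
      rw [hUevalQ h ((j:ℤ):ℝ)]
      have harg2 : ((2*j : ℤ):ℝ) = 2*((j:ℤ):ℝ) := by push_cast; ring
      rw [harg2]
    obtain ⟨β, hβ⟩ := SP_sum n J0
      (fun j => (Lagrange.basis J0 (fun j : ℤ => (j:ℝ)) j).coeff d)
      (fun j h => (U h).eval ((j:ℤ):ℝ)) hvalS
    refine ⟨β, ?_⟩
    apply hβ.congr' ?_ EventuallyEq.rfl
    filter_upwards with h
    rw [show ((Q (2*h)).coeff d - 2^d * (Q h).coeff d) = u d h from rfl, hcoeffsum h]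
    congr 1
    exact Finset.sum_congr rfl (fun j _ => mul_comm _ _)
  -- telescoping
  have hlamd : ∀ d ∈ Finset.range n, ∃ lam : ℝ,
      (fun h : ℝ => (Q h).coeff d - lam * h^n) =o[𝓝[≠] (0:ℝ)] fun h : ℝ => h^n := by
    intro d hd
    obtain ⟨β, hβ⟩ := hud d hd
    have hdn : d < n := Finset.mem_range.mp hd
    have hne : (2:ℝ)^n - 2^d ≠ 0 := by
      have := pow_lt_pow_right₀ (one_lt_two : (1:ℝ) < 2) hdn
      linarith
    refine ⟨β / (2^n - 2^d), ?_⟩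
    have hφ1 : (fun h : ℝ => (Q h).coeff d - β / (2^n - 2^d) * h^n)
        =o[𝓝[≠] (0:ℝ)] fun h : ℝ => h^(n-1) := by
      have h1 : (fun h : ℝ => h^n) =o[𝓝[≠] (0:ℝ)] fun h : ℝ => h^(n-1) :=
        (isLittleO_pow_pow (by omega : n - 1 < n)).mono nhdsWithin_le_nhds
      exact (hcoO d).sub (h1.const_mul_left _)
    have hφ2 : (fun h : ℝ => ((Q (2*h)).coeff d - β / (2^n - 2^d) * (2*h)^n)
        - 2^d * ((Q h).coeff d - β / (2^n - 2^d) * h^n)) =o[𝓝[≠] (0:ℝ)] fun h : ℝ => h^n := by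
      have heq2 : (fun h : ℝ => ((Q (2*h)).coeff d - β / (2^n - 2^d) * (2*h)^n)
          - 2^d * ((Q h).coeff d - β / (2^n - 2^d) * h^n))
          = fun h : ℝ => ((Q (2*h)).coeff d - 2^d * (Q h).coeff d) - β * h^n := by
        funext h
        have hc : β / (2^n - 2^d) * ((2:ℝ)^n - 2^d) = β := div_mul_cancel₀ β hne
        linear_combination (-(h^n) : ℝ) * hc
      rw [heq2]
      exact hβ
    exact telescope_littleO n d hdn (by omega)
      (fun h : ℝ => (Q h).coeff d - β / (2^n - 2^d) * h^n) hφ1 hφ2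
  -- conclusion
  obtain ⟨a, ha⟩ := SP_sum n (Finset.range n) (fun _ => (1:ℝ)) (fun d h => (Q h).coeff d) hlamd
  refine ⟨p + Polynomial.C a * (Polynomial.X - Polynomial.C c)^n, ?_, ?_⟩
  · have h1 : (p + Polynomial.C a * (Polynomial.X - Polynomial.C c)^n).natDegree ≤ n := by
      apply le_trans (Polynomial.natDegree_add_le _ _)
      apply max_le
      · have h2 : p.natDegree ≤ n - 1 := Polynomial.natDegree_le_iff_degree_le.mpr hpdeg
        omega
      · apply le_trans (Polynomial.natDegree_mul_le)
        simp [Polynomial.natDegree_pow, Polynomial.natDegree_X_sub_C]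
    exact Polynomial.natDegree_le_iff_degree_le.mp h1
  · have hgoal : (fun h : ℝ => f (c + h)
        - (p + Polynomial.C a * (Polynomial.X - Polynomial.C c)^n).eval (c + h))
        = fun h : ℝ => (∑ e ∈ Finset.range n, (1:ℝ) * (Q h).coeff e) - a * h^n := by
      funext h
      have h1 : (p + Polynomial.C a * (Polynomial.X - Polynomial.C c)^n).eval (c+h)
          = p.eval (c+h) + a * h^n := by
        simp [Polynomial.eval_add, Polynomial.eval_mul, Polynomial.eval_pow]
      have h2 : g h = ∑ e ∈ Finset.range n, (Q h).coeff e := by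
        have h3 : (Q h).eval ((1:ℕ):ℝ) = g (((1:ℕ):ℝ) * h) := hQnode h 1 (by omega)
        have h4 : (Q h).eval ((1:ℕ):ℝ) = ∑ e ∈ Finset.range n, (Q h).coeff e := by
          rw [hQeval]
          simp
        calc g h = g (((1:ℕ):ℝ) * h) := by norm_num
          _ = ∑ e ∈ Finset.range n, (Q h).coeff e := by rw [← h3, h4]
      have h5 : f (c+h) - (p.eval (c+h) + a*h^n) = g h - a*h^n := by
        simp [hgdef]; ring
      rw [h1, h5, h2]
      apply sub_left_inj.mpr
      exact Finset.sum_congr rfl (fun e _ => (one_mul _).symm)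
    rw [hgoal]
    exact ha
end
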